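/- arXiv:1811.06603 — 14 statements merged into one kernel-verified Lean document; each statement's English description precedes it below -/
import Mathlib

section
/- Let f be a submodular set function on a finite ground set N and let F be its multilinear extension. Then for every two vectors x, y in [0,1]^N with x ≤ y coordinatewise and every element u of N, it holds that F(x with its u-coordinate set to 1) − F(x with its u-coordinate set to 0) ≥ F(y with its u-coordinate set to 1) − F(y with its u-coordinate set to 0). (Equivalently, the gradient of F is antitone: ∇F(x) ≥ ∇F(y) coordinatewise whenever x ≤ y.) -/
open Finset

/-- The multilinear extension of a set function `f` on a finite ground set `N`. -/
noncomputable def multilinearExt {N : Type*} [Fintype N] [DecidableEq N]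
    (f : Finset N → ℝ) (x : N → ℝ) : ℝ :=
  ∑ S : Finset N, f S * ((∏ u ∈ S, x u) * ∏ u ∈ Sᶜ, (1 - x u))

section Aux

variable {N : Type*} [Fintype N] [DecidableEq N]

/-- The discrete `u`-derivative of the multilinear extension. -/
noncomputable def mlDeriv (f : Finset N → ℝ) (u : N) (z : N → ℝ) : ℝ :=
  multilinearExt f (Function.update z u 1) - multilinearExt f (Function.update z u 0)

lemma ext_update_eq (f : Finset N → ℝ) (z : N → ℝ) (u : N) (t : ℝ) :
    multilinearExt f (Function.update z u t) =
      ∑ S ∈ ({u}ᶜ : Finset N).powerset,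
        ((1 - t) * f S + t * f (insert u S)) *
          ((∏ w ∈ S, z w) * ∏ w ∈ (insert u S)ᶜ, (1 - z w)) := by
  have hu : u ∉ (({u}ᶜ : Finset N)) := by simp
  have huniv : insert u (({u}ᶜ : Finset N)) = Finset.univ := by
    ext w; by_cases h : w = u <;> simp [h]
  unfold multilinearExt
  rw [← Finset.powerset_univ, ← huniv, Finset.sum_powerset_insert hu,
    ← Finset.sum_add_distrib]
  refine Finset.sum_congr rfl fun S hS => ?_
  have hS' : S ⊆ ({u}ᶜ : Finset N) := Finset.mem_powerset.1 hS
  have huS : u ∉ S := fun h => by simpa using hS' h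
  have h1 : ∏ w ∈ S, Function.update z u t w = ∏ w ∈ S, z w :=
    Finset.prod_congr rfl fun w hw =>
      Function.update_of_ne (by rintro rfl; exact huS hw) _ _
  have huSc : u ∈ Sᶜ := Finset.mem_compl.2 huS
  have h2 : ∏ w ∈ Sᶜ, (1 - Function.update z u t w)
      = (1 - t) * ∏ w ∈ (insert u S)ᶜ, (1 - z w) := by
    rw [← Finset.mul_prod_erase _ _ huSc, Function.update_self, Finset.compl_insert]
    congr 1
    refine Finset.prod_congr rfl fun w hw => ?_
    rw [Function.update_of_ne (Finset.ne_of_mem_erase hw)]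
  have h3 : ∏ w ∈ insert u S, Function.update z u t w = t * ∏ w ∈ S, z w := by
    rw [Finset.prod_insert huS, Function.update_self, h1]
  have h4 : ∏ w ∈ (insert u S)ᶜ, (1 - Function.update z u t w)
      = ∏ w ∈ (insert u S)ᶜ, (1 - z w) := by
    refine Finset.prod_congr rfl fun w hw => ?_
    have hwu : w ≠ u := by
      intro h; subst h
      simp [Finset.mem_compl, Finset.mem_insert] at hw
    rw [Function.update_of_ne hwu]
  rw [h1, h2, h3, h4]
  ring

lemma sum_update_eq (g : Finset N → ℝ) (z : N → ℝ) (u v : N) (hvu : v ≠ u) (t : ℝ) :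
    ∑ S ∈ ({u}ᶜ : Finset N).powerset,
        g S * ((∏ w ∈ S, Function.update z v t w) *
          ∏ w ∈ (insert u S)ᶜ, (1 - Function.update z v t w)) =
      ∑ S ∈ (({u}ᶜ : Finset N).erase v).powerset,
        ((1 - t) * g S + t * g (insert v S)) *
          ((∏ w ∈ S, z w) * ∏ w ∈ (insert u (insert v S))ᶜ, (1 - z w)) := by
  have hv : v ∈ ({u}ᶜ : Finset N) := Finset.mem_compl.2 (by simpa using hvu)
  have hvr : v ∉ ({u}ᶜ : Finset N).erase v := Finset.notMem_erase _ _
  conv_lhs => rw [← Finset.insert_erase hv]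
  rw [Finset.sum_powerset_insert hvr, ← Finset.sum_add_distrib]
  refine Finset.sum_congr rfl fun S hS => ?_
  have hS' : S ⊆ ({u}ᶜ : Finset N).erase v := Finset.mem_powerset.1 hS
  have hvS : v ∉ S := fun h => hvr (hS' h)
  have huS : u ∉ S := fun h => by
    have h2 := Finset.mem_of_mem_erase (hS' h)
    simp at h2
  have huv : u ≠ v := Ne.symm hvu
  have hvuS : v ∈ (insert u S)ᶜ := by simp [Finset.mem_insert, hvu, hvS]
  have hset : (insert u (insert v S))ᶜ = (insert u S)ᶜ.erase v := by
    rw [Finset.insert_comm, Finset.compl_insert]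
  have h1 : ∏ w ∈ S, Function.update z v t w = ∏ w ∈ S, z w :=
    Finset.prod_congr rfl fun w hw =>
      Function.update_of_ne (by rintro rfl; exact hvS hw) _ _
  have h2 : ∏ w ∈ (insert u S)ᶜ, (1 - Function.update z v t w)
      = (1 - t) * ∏ w ∈ (insert u (insert v S))ᶜ, (1 - z w) := by
    rw [← Finset.mul_prod_erase _ _ hvuS, Function.update_self, hset]
    congr 1
    refine Finset.prod_congr rfl fun w hw => ?_
    rw [Function.update_of_ne (Finset.ne_of_mem_erase hw)]
  have h3 : ∏ w ∈ insert v S, Function.update z v t w = t * ∏ w ∈ S, z w := by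
    rw [Finset.prod_insert hvS, Function.update_self, h1]
  have h4 : ∏ w ∈ (insert u (insert v S))ᶜ, (1 - Function.update z v t w)
      = ∏ w ∈ (insert u (insert v S))ᶜ, (1 - z w) := by
    refine Finset.prod_congr rfl fun w hw => ?_
    have hwv : w ≠ v := by
      intro h; subst h
      simp [Finset.mem_compl, Finset.mem_insert] at hw
    rw [Function.update_of_ne hwv]
  rw [h1, h2, h3, h4]
  ring

lemma mlDeriv_eq (f : Finset N → ℝ) (u : N) (z : N → ℝ) :
    mlDeriv f u z =
      ∑ S ∈ ({u}ᶜ : Finset N).powerset,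
        (f (insert u S) - f S) *
          ((∏ w ∈ S, z w) * ∏ w ∈ (insert u S)ᶜ, (1 - z w)) := by
  unfold mlDeriv
  rw [ext_update_eq, ext_update_eq, ← Finset.sum_sub_distrib]
  refine Finset.sum_congr rfl fun S _ => ?_
  ring

lemma mlDeriv_update_le (f : Finset N → ℝ)
    (hsub : ∀ S T : Finset N, S ⊆ T → ∀ e ∉ T,
      f (insert e T) - f T ≤ f (insert e S) - f S)
    (z : N → ℝ) (hz : z ∈ Set.Icc (0 : N → ℝ) 1) (u v : N) {a b : ℝ} (hab : a ≤ b) :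
    mlDeriv f u (Function.update z v b) ≤ mlDeriv f u (Function.update z v a) := by
  by_cases hvu : v = u
  · subst hvu
    unfold mlDeriv
    rw [Function.update_idem, Function.update_idem, Function.update_idem,
      Function.update_idem]
  · rw [mlDeriv_eq, mlDeriv_eq, sum_update_eq _ _ _ _ hvu, sum_update_eq _ _ _ _ hvu]
    refine Finset.sum_le_sum fun S hS => ?_
    have hS' : S ⊆ ({u}ᶜ : Finset N).erase v := Finset.mem_powerset.1 hS
    have hvS : v ∉ S := fun h => Finset.notMem_erase _ _ (hS' h)
    have huS : u ∉ S := fun h => by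
      have h2 := Finset.mem_of_mem_erase (hS' h)
      simp at h2
    have huv : u ≠ v := Ne.symm hvu
    have huvS : u ∉ insert v S := by simp [Finset.mem_insert, huS, huv]
    have hmarg : f (insert u (insert v S)) - f (insert v S) ≤ f (insert u S) - f S :=
      hsub S (insert v S) (Finset.subset_insert _ _) u huvS
    have hW : 0 ≤ (∏ w ∈ S, z w) * ∏ w ∈ (insert u (insert v S))ᶜ, (1 - z w) := by
      refine mul_nonneg (Finset.prod_nonneg fun w _ => ?_)
        (Finset.prod_nonneg fun w _ => ?_)
      · simpa using hz.1 w
      · exact sub_nonneg.2 (by simpa using hz.2 w)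
    nlinarith [mul_le_mul_of_nonneg_right (sub_nonneg.2 hab) hW]

end Aux

theorem stmt_0 {N : Type*} [Fintype N] [DecidableEq N] (f : Finset N → ℝ)
    (hsub : ∀ S T : Finset N, S ⊆ T → ∀ e ∉ T,
      f (insert e T) - f T ≤ f (insert e S) - f S)
    (x y : N → ℝ) (hx : x ∈ Set.Icc (0 : N → ℝ) 1) (hy : y ∈ Set.Icc (0 : N → ℝ) 1)
    (hxy : x ≤ y) (u : N) :
    multilinearExt f (Function.update y u 1) - multilinearExt f (Function.update y u 0) ≤
      multilinearExt f (Function.update x u 1) - multilinearExt f (Function.update x u 0) := by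
  have hIcc : ∀ A : Finset N, A.piecewise y x ∈ Set.Icc (0 : N → ℝ) 1 := by
    intro A
    constructor
    · intro v
      by_cases h : v ∈ A
      · simpa [Finset.piecewise_eq_of_mem _ _ _ h] using hy.1 v
      · simpa [Finset.piecewise_eq_of_notMem _ _ _ h] using hx.1 v
    · intro v
      by_cases h : v ∈ A
      · simpa [Finset.piecewise_eq_of_mem _ _ _ h] using hy.2 v
      · simpa [Finset.piecewise_eq_of_notMem _ _ _ h] using hx.2 v
  have key : ∀ A : Finset N, mlDeriv f u (A.piecewise y x) ≤ mlDeriv f u x := by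
    intro A
    induction A using Finset.induction_on with
    | empty => rw [Finset.piecewise_empty]
    | @insert a s ha ih =>
      have h1 : (insert a s).piecewise y x
          = Function.update (s.piecewise y x) a (y a) := by
        ext v
        by_cases h : v = a
        · subst h
          rw [Function.update_self, Finset.piecewise_eq_of_mem _ _ _ (Finset.mem_insert_self _ _)]
        · rw [Function.update_of_ne h]
          by_cases h' : v ∈ s
          · rw [Finset.piecewise_eq_of_mem _ _ _ h',
              Finset.piecewise_eq_of_mem _ _ _ (Finset.mem_insert_of_mem h')]
          · rw [Finset.piecewise_eq_of_notMem _ _ _ h',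
              Finset.piecewise_eq_of_notMem]
            simp [Finset.mem_insert, h, h']
      have h2 : Function.update (s.piecewise y x) a (x a) = s.piecewise y x := by
        have h3 : (s.piecewise y x) a = x a := Finset.piecewise_eq_of_notMem _ _ _ ha
        rw [← h3, Function.update_eq_self]
      calc mlDeriv f u ((insert a s).piecewise y x)
          = mlDeriv f u (Function.update (s.piecewise y x) a (y a)) := by rw [h1]
        _ ≤ mlDeriv f u (Function.update (s.piecewise y x) a (x a)) :=
            mlDeriv_update_le f hsub _ (hIcc s) u a (hxy a)
        _ = mlDeriv f u (s.piecewise y x) := by rw [h2]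
        _ ≤ mlDeriv f u x := ih
  have hfin := key Finset.univ
  rw [Finset.piecewise_univ] at hfin
  exact hfin
end

section
/- Let a and b be real numbers with a + b ≥ 0, and define r := a/(a+b) if a > 0 and b > 0, r := 1 if a > 0 and b ≤ 0, and r := 0 if a ≤ 0. Then a·r + b·(1 − r) ≥ max(a, b)/2 ≥ 0. -/
theorem stmt_3 (a b : ℝ) (hab : 0 ≤ a + b) :
    let r : ℝ := if 0 < a ∧ 0 < b then a / (a + b) else if 0 < a then 1 else 0
    a * r + b * (1 - r) ≥ max a b / 2 ∧ max a b / 2 ≥ 0 := by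
  intro r
  by_cases h : 0 < a ∧ 0 < b
  · obtain ⟨ha, hb⟩ := h
    have hs : 0 < a + b := by linarith
    have hr : r = a / (a + b) := if_pos ⟨ha, hb⟩
    have key : a * r + b * (1 - r) = (a^2 + b^2) / (a + b) := by
      rw [hr]; field_simp; ring
    constructor
    · rw [key, ge_iff_le, div_le_div_iff₀ (by positivity) hs]
      rcases le_total a b with h' | h'
      · rw [max_eq_right h']; nlinarith
      · rw [max_eq_left h']; nlinarith
    · have : 0 ≤ max a b := le_max_of_le_left ha.le
      linarith
  · by_cases ha : 0 < a
    · have hb : b ≤ 0 := by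
        by_contra hb; exact h ⟨ha, lt_of_not_ge hb⟩
      have hr : r = 1 := by simp [r, if_neg h, if_pos ha]
      rw [hr]
      have hmax : max a b = a := max_eq_left (by linarith)
      constructor <;> simp [hmax] <;> linarith
    · have ha' : a ≤ 0 := le_of_not_gt ha
      have hb : 0 ≤ b := by linarith
      have hr : r = 0 := by simp [r, if_neg h, if_neg ha]
      rw [hr]
      have hmax : max a b = b := max_eq_right (by linarith)
      constructor <;> simp [hmax] <;> linarith
end

section
/- Let f be a non-negative submodular set function on a finite ground set N and let F be its multilinear extension. Then F((1/2)·1_N) ≥ (1/4)·f(S) for every set S ⊆ N, and F((1/2)·1_N) ≤ max_{T ⊆ N} f(T), where (1/2)·1_N is the vector with all coordinates equal to 1/2. -/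
open Finset

lemma lattice_submodular {N : Type*} [DecidableEq N] (f : Finset N → ℝ)
    (hsub : ∀ S T : Finset N, S ⊆ T → ∀ e ∉ T,
      f (insert e T) - f T ≤ f (insert e S) - f S) :
    ∀ (k : ℕ) (X Y : Finset N), (Y \ X).card = k →
      f (X ∪ Y) + f (X ∩ Y) ≤ f X + f Y := by
  intro k
  induction k with
  | zero =>
    intro X Y h
    have hYX : Y ⊆ X := by
      rwa [Finset.card_eq_zero, Finset.sdiff_eq_empty_iff_subset] at h
    rw [Finset.union_eq_left.2 hYX, Finset.inter_eq_right.2 hYX]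
  | succ n ih =>
    intro X Y h
    obtain ⟨e, he⟩ : (Y \ X).Nonempty := Finset.card_pos.mp (by omega)
    have heY : e ∈ Y := (Finset.mem_sdiff.mp he).1
    have heX : e ∉ X := (Finset.mem_sdiff.mp he).2
    have h1 : (Y \ insert e X).card = n := by
      rw [Finset.sdiff_insert, Finset.card_erase_of_mem he, h]; omega
    have hIH := ih (insert e X) Y h1
    have hu : insert e X ∪ Y = X ∪ Y := by
      rw [Finset.insert_union, Finset.insert_eq_self.2 (Finset.mem_union_right _ heY)]
    have hi : insert e X ∩ Y = insert e (X ∩ Y) := by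
      ext x
      simp only [Finset.mem_inter, Finset.mem_insert]
      constructor
      · rintro ⟨hx | hx, hy⟩
        · exact Or.inl hx
        · exact Or.inr ⟨hx, hy⟩
      · rintro (rfl | ⟨hx, hy⟩)
        · exact ⟨Or.inl rfl, heY⟩
        · exact ⟨Or.inr hx, hy⟩
    rw [hu, hi] at hIH
    have hm := hsub (X ∩ Y) X Finset.inter_subset_left e heX
    linarith

theorem stmt_5 {N : Type*} [Fintype N] [DecidableEq N] (f : Finset N → ℝ)
    (hnn : ∀ S : Finset N, 0 ≤ f S)
    (hsub : ∀ S T : Finset N, S ⊆ T → ∀ e ∉ T,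
      f (insert e T) - f T ≤ f (insert e S) - f S) :
    (∀ S : Finset N, (1 / 4 : ℝ) * f S ≤ multilinearExt f (fun _ => (1 / 2 : ℝ))) ∧
      multilinearExt f (fun _ => (1 / 2 : ℝ)) ≤
        (Finset.univ : Finset (Finset N)).sup' Finset.univ_nonempty f := by
  have hlat : ∀ X Y : Finset N, f (X ∪ Y) + f (X ∩ Y) ≤ f X + f Y := fun X Y =>
    lattice_submodular f hsub _ X Y rfl
  set n := Fintype.card N with hn
  have hF : multilinearExt f (fun _ => (1 / 2 : ℝ))
      = (1 / 2 : ℝ) ^ n * ∑ T : Finset N, f T := by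
    rw [multilinearExt, Finset.mul_sum]
    refine Finset.sum_congr rfl fun T _ => ?_
    simp only [Finset.prod_const]
    rw [show (1 : ℝ) - 1 / 2 = 1 / 2 by norm_num, ← pow_add, Finset.card_add_card_compl]
    ring
  constructor
  · intro S
    -- reindexing lemma: summing over powerset of `U` of `g` = of `g (U \ ·)`
    have hreflect : ∀ (U : Finset N) (g : Finset N → ℝ),
        ∑ A ∈ U.powerset, g (U \ A) = ∑ A ∈ U.powerset, g A := by
      intro U g
      refine Finset.sum_nbij' (fun A => U \ A) (fun A => U \ A) ?_ ?_ ?_ ?_ ?_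
      · intro A hA; exact Finset.mem_powerset.mpr (Finset.sdiff_subset)
      · intro A hA; exact Finset.mem_powerset.mpr (Finset.sdiff_subset)
      · intro A hA; exact Finset.sdiff_sdiff_eq_self (Finset.mem_powerset.mp hA)
      · intro A hA; exact Finset.sdiff_sdiff_eq_self (Finset.mem_powerset.mp hA)
      · intro A hA; rfl
    -- split the total sum as a double sum
    have hsplit : ∑ T : Finset N, f T
        = ∑ B ∈ Sᶜ.powerset, ∑ A ∈ S.powerset, f (A ∪ B) := by
      rw [Finset.sum_comm, ← Finset.sum_product']
      refine (Finset.sum_nbij' (fun p : Finset N × Finset N => p.1 ∪ p.2)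
        (fun T => (T ∩ S, T ∩ Sᶜ)) ?_ ?_ ?_ ?_ ?_).symm
      · intro p _; exact Finset.mem_univ _
      · intro T _
        simp [Finset.mem_product, Finset.mem_powerset, Finset.inter_subset_right]
      · intro p hp
        simp only [Finset.mem_product, Finset.mem_powerset] at hp
        have hA : ∀ x ∈ p.1, x ∈ S := fun x hx => hp.1 hx
        have hB : ∀ x ∈ p.2, x ∉ S := fun x hx => Finset.mem_compl.mp (hp.2 hx)
        have e1 : (p.1 ∪ p.2) ∩ S = p.1 := by
          ext x
          simp only [Finset.mem_inter, Finset.mem_union]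
          constructor
          · rintro ⟨h1 | h1, h2⟩
            · exact h1
            · exact absurd h2 (hB x h1)
          · intro hx; exact ⟨Or.inl hx, hA x hx⟩
        have e2 : (p.1 ∪ p.2) ∩ Sᶜ = p.2 := by
          ext x
          simp only [Finset.mem_inter, Finset.mem_union, Finset.mem_compl]
          constructor
          · rintro ⟨h1 | h1, h2⟩
            · exact absurd (hA x h1) h2
            · exact h1
          · intro hx; exact ⟨Or.inr hx, hB x hx⟩
        exact Prod.ext e1 e2
      · intro T _
        ext x
        simp only [Finset.mem_union, Finset.mem_inter, Finset.mem_compl]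
        tauto
      · intro p _; rfl
    -- inner bound
    have hinner : ∀ B : Finset N, (2 : ℝ) ^ S.card / 2 * f (S ∪ B)
        ≤ ∑ A ∈ S.powerset, f (A ∪ B) := by
      intro B
      have hpair : ∀ A ∈ S.powerset, f (S ∪ B) ≤ f (A ∪ B) + f ((S \ A) ∪ B) := by
        intro A hA
        have hAS : ∀ x ∈ A, x ∈ S := fun x hx => Finset.mem_powerset.mp hA hx
        have hu : (A ∪ B) ∪ ((S \ A) ∪ B) = S ∪ B := by
          ext x
          simp only [Finset.mem_union, Finset.mem_sdiff]
          constructor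
          · rintro ((h | h) | (⟨h, _⟩ | h))
            · exact Or.inl (hAS x h)
            · exact Or.inr h
            · exact Or.inl h
            · exact Or.inr h
          · rintro (h | h)
            · by_cases hxA : x ∈ A
              · exact Or.inl (Or.inl hxA)
              · exact Or.inr (Or.inl ⟨h, hxA⟩)
            · exact Or.inl (Or.inr h)
        have hi : (A ∪ B) ∩ ((S \ A) ∪ B) = B := by
          ext x
          simp only [Finset.mem_inter, Finset.mem_union, Finset.mem_sdiff]
          constructor
          · rintro ⟨h1 | h1, h2 | h2⟩
            · exact absurd h1 h2.2
            · exact h2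
            · exact h1
            · exact h1
          · intro hx; exact ⟨Or.inr hx, Or.inr hx⟩
        have := hlat (A ∪ B) ((S \ A) ∪ B)
        rw [hu, hi] at this
        linarith [hnn B]
      have h2 : 2 * ∑ A ∈ S.powerset, f (A ∪ B)
          = ∑ A ∈ S.powerset, (f (A ∪ B) + f ((S \ A) ∪ B)) := by
        rw [Finset.sum_add_distrib, hreflect S (fun A => f (A ∪ B))]
        ring
      have h3 : ∑ A ∈ S.powerset, f (S ∪ B)
          ≤ ∑ A ∈ S.powerset, (f (A ∪ B) + f ((S \ A) ∪ B)) :=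
        Finset.sum_le_sum hpair
      rw [Finset.sum_const, Finset.card_powerset] at h3
      rw [← h2] at h3
      have : (2 : ℝ) ^ S.card * f (S ∪ B) ≤ 2 * ∑ A ∈ S.powerset, f (A ∪ B) := by
        simpa [nsmul_eq_mul] using h3
      linarith
    -- outer bound
    have houter : (2 : ℝ) ^ Sᶜ.card / 2 * f S ≤ ∑ B ∈ Sᶜ.powerset, f (S ∪ B) := by
      have hpair : ∀ B ∈ Sᶜ.powerset, f S ≤ f (S ∪ B) + f (S ∪ (Sᶜ \ B)) := by
        intro B hB
        have hBS : ∀ x ∈ B, x ∉ S := fun x hx =>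
          Finset.mem_compl.mp (Finset.mem_powerset.mp hB hx)
        have hu : (S ∪ B) ∪ (S ∪ (Sᶜ \ B)) = Finset.univ := by
          ext x
          simp only [Finset.mem_union, Finset.mem_sdiff, Finset.mem_compl,
            Finset.mem_univ, iff_true]
          by_cases hxS : x ∈ S
          · exact Or.inl (Or.inl hxS)
          · by_cases hxB : x ∈ B
            · exact Or.inl (Or.inr hxB)
            · exact Or.inr (Or.inr ⟨hxS, hxB⟩)
        have hi : (S ∪ B) ∩ (S ∪ (Sᶜ \ B)) = S := by
          ext x
          simp only [Finset.mem_inter, Finset.mem_union, Finset.mem_sdiff,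
            Finset.mem_compl]
          constructor
          · rintro ⟨h1 | h1, h2 | h2⟩
            · exact h1
            · exact h1
            · exact h2
            · exact absurd h1 h2.2
          · intro hx; exact ⟨Or.inl hx, Or.inl hx⟩
        have := hlat (S ∪ B) (S ∪ (Sᶜ \ B))
        rw [hu, hi] at this
        linarith [hnn Finset.univ]
      have h2 : 2 * ∑ B ∈ Sᶜ.powerset, f (S ∪ B)
          = ∑ B ∈ Sᶜ.powerset, (f (S ∪ B) + f (S ∪ (Sᶜ \ B))) := by
        rw [Finset.sum_add_distrib, hreflect Sᶜ (fun B => f (S ∪ B))]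
        ring
      have h3 : ∑ B ∈ Sᶜ.powerset, f S
          ≤ ∑ B ∈ Sᶜ.powerset, (f (S ∪ B) + f (S ∪ (Sᶜ \ B))) :=
        Finset.sum_le_sum hpair
      rw [Finset.sum_const, Finset.card_powerset] at h3
      rw [← h2] at h3
      have : (2 : ℝ) ^ Sᶜ.card * f S ≤ 2 * ∑ B ∈ Sᶜ.powerset, f (S ∪ B) := by
        simpa [nsmul_eq_mul] using h3
      linarith
    have hchain : (2 : ℝ) ^ n / 4 * f S ≤ ∑ T : Finset N, f T := by
      rw [hsplit]
      have step1 : ∑ B ∈ Sᶜ.powerset, (2 : ℝ) ^ S.card / 2 * f (S ∪ B)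
          ≤ ∑ B ∈ Sᶜ.powerset, ∑ A ∈ S.powerset, f (A ∪ B) :=
        Finset.sum_le_sum fun B _ => hinner B
      have step2 : (2 : ℝ) ^ S.card / 2 * ((2 : ℝ) ^ Sᶜ.card / 2 * f S)
          ≤ ∑ B ∈ Sᶜ.powerset, (2 : ℝ) ^ S.card / 2 * f (S ∪ B) := by
        rw [← Finset.mul_sum]
        exact mul_le_mul_of_nonneg_left houter (by positivity)
      have hcard : S.card + Sᶜ.card = n := Finset.card_add_card_compl S
      calc (2 : ℝ) ^ n / 4 * f S
          = (2 : ℝ) ^ S.card / 2 * ((2 : ℝ) ^ Sᶜ.card / 2 * f S) := by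
            rw [← hcard, pow_add]; ring
        _ ≤ _ := le_trans step2 step1
    rw [hF]
    have hpow : (0 : ℝ) < (1 / 2 : ℝ) ^ n := by positivity
    have key : (1 / 2 : ℝ) ^ n * ((2 : ℝ) ^ n / 4 * f S)
        ≤ (1 / 2 : ℝ) ^ n * ∑ T : Finset N, f T :=
      mul_le_mul_of_nonneg_left hchain hpow.le
    have heq : (1 / 2 : ℝ) ^ n * ((2 : ℝ) ^ n / 4 * f S) = 1 / 4 * f S := by
      rw [one_div, inv_pow, show ((2:ℝ)^n)⁻¹ * ((2:ℝ)^n / 4 * f S)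
        = ((2:ℝ)^n)⁻¹ * (2:ℝ)^n * (f S / 4) by ring,
        inv_mul_cancel₀ (by positivity)]
      ring
    linarith
  · rw [hF]
    set M := (Finset.univ : Finset (Finset N)).sup' Finset.univ_nonempty f with hM
    have hbound : ∑ T : Finset N, f T ≤ (2 : ℝ) ^ n * M := by
      calc ∑ T : Finset N, f T ≤ ∑ _T : Finset N, M :=
            Finset.sum_le_sum fun T _ => Finset.le_sup' f (Finset.mem_univ T)
        _ = (2 : ℝ) ^ n * M := by
            rw [Finset.sum_const, nsmul_eq_mul]
            norm_num [Fintype.card_finset, hn]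
    have hpow : (0 : ℝ) ≤ (1 / 2 : ℝ) ^ n := by positivity
    calc (1 / 2 : ℝ) ^ n * ∑ T : Finset N, f T
        ≤ (1 / 2 : ℝ) ^ n * ((2 : ℝ) ^ n * M) := mul_le_mul_of_nonneg_left hbound hpow
      _ = M := by
          rw [one_div, inv_pow, ← mul_assoc, inv_mul_cancel₀ (by positivity), one_mul]
end

section
/- Let f be a non-negative submodular set function on a finite ground set N with multilinear extension F, let S ⊆ N, and let δ ∈ [0, 1/2]. Then F((1_S ∨ (δ·1_N)) ∧ ((1−δ)·1_N)) ≥ (1 − 2δ) · f(S), i.e., the value of F at the vector whose u-coordinate is 1−δ for u ∈ S and δ for u ∉ S is at least (1 − 2δ)·f(S). -/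
open Finset

section Aux

variable {N : Type*} [Fintype N] [DecidableEq N]

lemma marg_aux (f : Finset N → ℝ)
    (hsub : ∀ S T : Finset N, S ⊆ T → ∀ e ∉ T,
      f (insert e T) - f T ≤ f (insert e S) - f S) :
    ∀ (D A B : Finset N), A ⊆ B → Disjoint D B →
      f (B ∪ D) - f B ≤ f (A ∪ D) - f A := by
  intro D
  induction D using Finset.induction_on with
  | empty => intro A B hAB _; simp
  | @insert e D' he ih =>
    intro A B hAB hdisj
    rw [Finset.disjoint_insert_left] at hdisj
    have h1 := ih A B hAB hdisj.2
    have heB : e ∉ B ∪ D' := by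
      simp only [Finset.mem_union]
      push_neg
      exact ⟨hdisj.1, he⟩
    have h2 := hsub (A ∪ D') (B ∪ D') (Finset.union_subset_union_left hAB) e heB
    rw [Finset.union_insert, Finset.union_insert]
    linarith

lemma sub2 (f : Finset N → ℝ)
    (hsub : ∀ S T : Finset N, S ⊆ T → ∀ e ∉ T,
      f (insert e T) - f T ≤ f (insert e S) - f S)
    (X Y : Finset N) : f (X ∪ Y) + f (X ∩ Y) ≤ f X + f Y := by
  have h := marg_aux f hsub (X \ Y) (X ∩ Y) Y Finset.inter_subset_right Finset.sdiff_disjoint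
  have e1 : Y ∪ X \ Y = X ∪ Y := by
    ext u; simp only [Finset.mem_union, Finset.mem_sdiff]; tauto
  have e2 : X ∩ Y ∪ X \ Y = X := by
    ext u; simp only [Finset.mem_union, Finset.mem_inter, Finset.mem_sdiff]; tauto
  rw [e1, e2] at h
  linarith

lemma samp (f : Finset N → ℝ)
    (hsub : ∀ S T : Finset N, S ⊆ T → ∀ e ∉ T,
      f (insert e T) - f T ≤ f (insert e S) - f S)
    (p : ℝ) (hp0 : 0 ≤ p) (hp1 : p ≤ 1) :
    ∀ (A C : Finset N), Disjoint A C →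
      (1 - p) * f C + p * f (A ∪ C) ≤
        ∑ B ∈ A.powerset, p ^ B.card * (1 - p) ^ ((A \ B).card) * f (B ∪ C) := by
  intro A
  induction A using Finset.induction_on with
  | empty =>
    intro C _
    simp only [Finset.powerset_empty, Finset.sum_singleton, Finset.card_empty, pow_zero,
      Finset.empty_union, Finset.sdiff_empty, one_mul, mul_one]
    nlinarith [le_refl (f C)]
  | @insert a A ha ih =>
    intro C hdisj
    rw [Finset.disjoint_insert_left] at hdisj
    have haC : a ∉ C := hdisj.1
    have hAC : Disjoint A C := hdisj.2
    have hAC' : Disjoint A (insert a C) := by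
      rw [Finset.disjoint_insert_right]; exact ⟨ha, hAC⟩
    rw [Finset.sum_powerset_insert ha]
    have t1 : ∀ B ∈ A.powerset,
        p ^ B.card * (1 - p) ^ ((insert a A \ B).card) * f (B ∪ C)
          = (1 - p) * (p ^ B.card * (1 - p) ^ ((A \ B).card) * f (B ∪ C)) := by
      intro B hB
      rw [Finset.mem_powerset] at hB
      have haB : a ∉ B := fun h => ha (hB h)
      have : insert a A \ B = insert a (A \ B) := by
        ext u
        simp only [Finset.mem_sdiff, Finset.mem_insert]
        constructor
        · rintro ⟨h1 | h1, h2⟩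
          · exact Or.inl h1
          · exact Or.inr ⟨h1, h2⟩
        · rintro (h1 | ⟨h1, h2⟩)
          · exact ⟨Or.inl h1, h1 ▸ haB⟩
          · exact ⟨Or.inr h1, h2⟩
      rw [this, Finset.card_insert_of_notMem (fun h => ha (Finset.mem_sdiff.mp h).1)]
      ring
    have t2 : ∀ B ∈ A.powerset,
        p ^ (insert a B).card * (1 - p) ^ ((insert a A \ insert a B).card) * f (insert a B ∪ C)
          = p * (p ^ B.card * (1 - p) ^ ((A \ B).card) * f (B ∪ insert a C)) := by
      intro B hB
      rw [Finset.mem_powerset] at hB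
      have haB : a ∉ B := fun h => ha (hB h)
      have e1 : insert a A \ insert a B = A \ B := by
        ext u
        simp only [Finset.mem_sdiff, Finset.mem_insert]
        constructor
        · rintro ⟨h1 | h1, h2⟩
          · exact absurd (Or.inl h1) h2
          · push_neg at h2
            exact ⟨h1, h2.2⟩
        · rintro ⟨h1, h2⟩
          refine ⟨Or.inr h1, ?_⟩
          push_neg
          exact ⟨fun h => ha (h ▸ h1), h2⟩
      have e2 : insert a B ∪ C = B ∪ insert a C := by
        rw [Finset.insert_union, Finset.union_insert]
      rw [e1, e2, Finset.card_insert_of_notMem haB]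
      ring
    rw [Finset.sum_congr rfl t1, Finset.sum_congr rfl t2, ← Finset.mul_sum, ← Finset.mul_sum]
    have h1 := ih C hAC
    have h2 := ih (insert a C) hAC'
    have e3 : (A ∪ C) ∪ insert a C = insert a A ∪ C := by
      ext u
      simp only [Finset.mem_union, Finset.mem_insert]
      tauto
    have e4 : (A ∪ C) ∩ insert a C = C := by
      ext u
      simp only [Finset.mem_inter, Finset.mem_union, Finset.mem_insert]
      constructor
      · rintro ⟨h1 | h1, h2 | h2⟩
        · exact absurd h1 (h2 ▸ ha)
        · exact h2
        · exact h1
        · exact h1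
      · intro h; exact ⟨Or.inr h, Or.inr h⟩
    have h3 := sub2 f hsub (A ∪ C) (insert a C)
    rw [e3, e4] at h3
    have e5 : A ∪ insert a C = insert a A ∪ C := by
      rw [Finset.union_insert, Finset.insert_union]
    rw [e5] at h2
    have hp1' : (0:ℝ) ≤ 1 - p := by linarith
    have h1' := mul_le_mul_of_nonneg_left h1 hp1'
    have h2' := mul_le_mul_of_nonneg_left h2 hp0
    have h3' := mul_le_mul_of_nonneg_left h3 (mul_nonneg hp0 hp1')
    nlinarith [h1', h2', h3']

lemma wsum (p : ℝ) (A : Finset N) :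
    ∑ B ∈ A.powerset, p ^ B.card * (1 - p) ^ ((A \ B).card) = 1 := by
  have h := Finset.prod_add (fun _ : N => p) (fun _ : N => 1 - p) A
  simp only [Finset.prod_const] at h
  rw [show p + (1 - p) = 1 by ring, one_pow] at h
  exact h.symm

end Aux

theorem stmt_6 {N : Type*} [Fintype N] [DecidableEq N] (f : Finset N → ℝ)
    (hsub : ∀ S T : Finset N, S ⊆ T → ∀ e ∉ T,
      f (insert e T) - f T ≤ f (insert e S) - f S)
    (hnn : ∀ S : Finset N, 0 ≤ f S)
    (S : Finset N) (δ : ℝ) (hδ : δ ∈ Set.Icc (0 : ℝ) (1 / 2)) :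
    (1 - 2 * δ) * f S ≤
      multilinearExt f (fun u => if u ∈ S then 1 - δ else δ) := by
  obtain ⟨h0, hhalf⟩ := hδ
  have h1 : δ ≤ 1 := by linarith
  have h1' : (0:ℝ) ≤ 1 - δ := by linarith
  set x : N → ℝ := fun u => if u ∈ S then 1 - δ else δ with hx
  -- reindex the sum over all subsets by pairs (A ⊆ S, B ⊆ Sᶜ)
  have reindex : ∀ g : Finset N → ℝ,
      ∑ T : Finset N, g T = ∑ A ∈ S.powerset, ∑ B ∈ Sᶜ.powerset, g (A ∪ B) := by
    intro g
    rw [← Finset.sum_product']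
    apply Finset.sum_nbij' (i := fun T => (T ∩ S, T \ S)) (j := fun q => q.1 ∪ q.2)
    · intro T _
      simp only [Finset.mem_product, Finset.mem_powerset]
      exact ⟨Finset.inter_subset_right, fun u hu => by
        simp only [Finset.mem_compl]
        exact (Finset.mem_sdiff.mp hu).2⟩
    · intro q _; exact Finset.mem_univ _
    · intro T _
      simp only
      ext u
      simp only [Finset.mem_union, Finset.mem_inter, Finset.mem_sdiff]
      tauto
    · rintro ⟨A, B⟩ hq
      simp only [Finset.mem_product, Finset.mem_powerset] at hq
      obtain ⟨hA, hB⟩ := hq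
      have e1 : (A ∪ B) ∩ S = A := by
        ext u
        simp only [Finset.mem_inter, Finset.mem_union]
        constructor
        · rintro ⟨hu1 | hu1, hu2⟩
          · exact hu1
          · exact absurd hu2 (Finset.mem_compl.mp (hB hu1))
        · intro hu; exact ⟨Or.inl hu, hA hu⟩
      have e2 : (A ∪ B) \ S = B := by
        ext u
        simp only [Finset.mem_sdiff, Finset.mem_union]
        constructor
        · rintro ⟨hu1 | hu1, hu2⟩
          · exact absurd (hA hu1) hu2
          · exact hu1
        · intro hu; exact ⟨Or.inr hu, Finset.mem_compl.mp (hB hu)⟩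
      simp only [e1, e2]
    · intro T _
      have e : T ∩ S ∪ T \ S = T := by
        ext u
        simp only [Finset.mem_union, Finset.mem_inter, Finset.mem_sdiff]
        tauto
      simp only [e]
  -- weights
  set wS : Finset N → ℝ := fun A => (1 - δ) ^ A.card * δ ^ ((S \ A).card) with hwSdef
  set wC : Finset N → ℝ := fun B => δ ^ B.card * (1 - δ) ^ ((Sᶜ \ B).card) with hwCdef
  have hwSnn : ∀ A, 0 ≤ wS A := fun A => mul_nonneg (pow_nonneg h1' _) (pow_nonneg h0 _)
  have hwCnn : ∀ B, 0 ≤ wC B := fun B => mul_nonneg (pow_nonneg h0 _) (pow_nonneg h1' _)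
  have hwSsum : ∑ A ∈ S.powerset, wS A = 1 := by
    have h := wsum (N := N) (1 - δ) S
    rw [show (1:ℝ) - (1 - δ) = δ by ring] at h
    exact h
  have hwCsum : ∑ B ∈ Sᶜ.powerset, wC B = 1 := wsum δ Sᶜ
  -- weight factorization
  have wfac : ∀ A ∈ S.powerset, ∀ B ∈ Sᶜ.powerset,
      (∏ u ∈ A ∪ B, x u) * ∏ u ∈ (A ∪ B)ᶜ, (1 - x u) = wS A * wC B := by
    intro A hA B hB
    rw [Finset.mem_powerset] at hA hB
    have hA' : ∀ u, u ∈ A → u ∈ S := fun u hu => hA hu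
    have hB' : ∀ u, u ∈ B → u ∉ S := fun u hu => Finset.mem_compl.mp (hB hu)
    have hdAB : Disjoint A B := Finset.disjoint_left.mpr fun u hu h2 => hB' u h2 (hA' u hu)
    have pA : ∏ u ∈ A, x u = (1 - δ) ^ A.card := by
      rw [Finset.prod_congr rfl fun u hu => if_pos (hA' u hu)]
      exact Finset.prod_const _
    have pB : ∏ u ∈ B, x u = δ ^ B.card := by
      rw [Finset.prod_congr rfl fun u hu => if_neg (hB' u hu)]
      exact Finset.prod_const _
    have ec : (A ∪ B)ᶜ = (S \ A) ∪ (Sᶜ \ B) := by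
      ext u
      simp only [Finset.mem_compl, Finset.mem_union, Finset.mem_sdiff, not_or]
      have := hA' u
      have := hB' u
      by_cases hu : u ∈ S <;> tauto
    have hdSC : Disjoint (S \ A) (Sᶜ \ B) := Finset.disjoint_left.mpr
      fun u hu h2 => (Finset.mem_compl.mp (Finset.mem_sdiff.mp h2).1) (Finset.mem_sdiff.mp hu).1
    have pSA : ∏ u ∈ S \ A, (1 - x u) = δ ^ ((S \ A).card) := by
      have e : ∀ u ∈ S \ A, 1 - x u = δ := by
        intro u hu
        have hu' : u ∈ S := (Finset.mem_sdiff.mp hu).1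
        simp [hx, hu']
      rw [Finset.prod_congr rfl e]
      exact Finset.prod_const _
    have pCB : ∏ u ∈ Sᶜ \ B, (1 - x u) = (1 - δ) ^ ((Sᶜ \ B).card) := by
      have e : ∀ u ∈ Sᶜ \ B, 1 - x u = 1 - δ := by
        intro u hu
        have hu' : u ∉ S := Finset.mem_compl.mp (Finset.mem_sdiff.mp hu).1
        simp [hx, hu']
      rw [Finset.prod_congr rfl e]
      exact Finset.prod_const _
    rw [Finset.prod_union hdAB, ec, Finset.prod_union hdSC, pA, pB, pSA, pCB]
    ring
  -- pointwise submodularity bound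
  have point : ∀ A ∈ S.powerset, ∀ B ∈ Sᶜ.powerset,
      f (S ∪ B) + f A - f S ≤ f (A ∪ B) := by
    intro A hA B hB
    rw [Finset.mem_powerset] at hA hB
    have hA' : ∀ u, u ∈ A → u ∈ S := fun u hu => hA hu
    have hB' : ∀ u, u ∈ B → u ∉ S := fun u hu => Finset.mem_compl.mp (hB hu)
    have h := sub2 f hsub (A ∪ B) S
    have e1 : (A ∪ B) ∪ S = S ∪ B := by
      ext u
      simp only [Finset.mem_union]
      have := hA' u
      tauto
    have e2 : (A ∪ B) ∩ S = A := by
      ext u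
      simp only [Finset.mem_inter, Finset.mem_union]
      have := hA' u
      have := hB' u
      tauto
    rw [e1, e2] at h
    linarith
  -- the two sampling bounds
  have hsampB : (1 - δ) * f S ≤ ∑ B ∈ Sᶜ.powerset, wC B * f (S ∪ B) := by
    have h := samp f hsub δ h0 h1 Sᶜ S disjoint_compl_left
    have e : ∀ B ∈ Sᶜ.powerset,
        δ ^ B.card * (1 - δ) ^ ((Sᶜ \ B).card) * f (B ∪ S) = wC B * f (S ∪ B) := by
      intro B _
      rw [Finset.union_comm, hwCdef]
    rw [Finset.sum_congr rfl e] at h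
    have := hnn (Sᶜ ∪ S)
    nlinarith
  have hsampA : (1 - δ) * f S ≤ ∑ A ∈ S.powerset, wS A * f A := by
    have h := samp f hsub (1 - δ) h1' (by linarith) S ∅ (Finset.disjoint_empty_right S)
    rw [show (1:ℝ) - (1 - δ) = δ by ring, Finset.union_empty] at h
    have e : ∀ A ∈ S.powerset,
        (1 - δ) ^ A.card * δ ^ ((S \ A).card) * f (A ∪ ∅) = wS A * f A := by
      intro A _
      rw [Finset.union_empty, hwSdef]
    rw [Finset.sum_congr rfl e] at h
    have := hnn ∅
    nlinarith
  -- rewrite the multilinear extension as a double sum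
  have eq1 : multilinearExt f x
      = ∑ A ∈ S.powerset, ∑ B ∈ Sᶜ.powerset, wS A * wC B * f (A ∪ B) := by
    rw [multilinearExt, reindex (fun T => f T * ((∏ u ∈ T, x u) * ∏ u ∈ Tᶜ, (1 - x u)))]
    refine Finset.sum_congr rfl fun A hA => Finset.sum_congr rfl fun B hB => ?_
    rw [wfac A hA B hB]
    ring
  set K : ℝ := ∑ B ∈ Sᶜ.powerset, wC B * f (S ∪ B) with hK
  have step1 : ∑ A ∈ S.powerset, (wS A * K + (f A - f S) * wS A)
      ≤ ∑ A ∈ S.powerset, ∑ B ∈ Sᶜ.powerset, wS A * wC B * f (A ∪ B) := by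
    refine Finset.sum_le_sum fun A hA => ?_
    have inner : ∑ B ∈ Sᶜ.powerset, wS A * wC B * (f (S ∪ B) + f A - f S)
        ≤ ∑ B ∈ Sᶜ.powerset, wS A * wC B * f (A ∪ B) := by
      refine Finset.sum_le_sum fun B hB => ?_
      exact mul_le_mul_of_nonneg_left (point A hA B hB)
        (mul_nonneg (hwSnn A) (hwCnn B))
    refine le_trans (le_of_eq ?_) inner
    have expand : ∑ B ∈ Sᶜ.powerset, wS A * wC B * (f (S ∪ B) + f A - f S)
        = wS A * K + (f A - f S) * wS A * (∑ B ∈ Sᶜ.powerset, wC B) := by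
      rw [hK, Finset.mul_sum, Finset.mul_sum, ← Finset.sum_add_distrib]
      exact Finset.sum_congr rfl fun B _ => by ring
    rw [expand, hwCsum]
    ring
  have step2 : ∑ A ∈ S.powerset, (wS A * K + (f A - f S) * wS A)
      = K + (∑ A ∈ S.powerset, wS A * f A) - f S := by
    rw [Finset.sum_add_distrib, ← Finset.sum_mul, hwSsum]
    have : ∑ A ∈ S.powerset, (f A - f S) * wS A
        = (∑ A ∈ S.powerset, wS A * f A) - f S * ∑ A ∈ S.powerset, wS A := by
      rw [Finset.mul_sum, ← Finset.sum_sub_distrib]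
      exact Finset.sum_congr rfl fun A _ => by ring
    rw [this, hwSsum]
    ring
  rw [eq1]
  rw [step2] at step1
  linarith
end

section
/- Let N be a finite set and let F: ℝ^N → ℝ be differentiable on the box [0,1]^N, non-negative on [0,1]^N, and have an antitone gradient on the box (i.e., ∇F(x) ≥ ∇F(y) coordinatewise whenever x ≤ y coordinatewise, x, y ∈ [0,1]^N). Let ε > 0, τ ≥ 0, and let δ ∈ [ε, 1/2]. If for every t ∈ [0, δ − ε) it holds that Σ_{u∈N} [∂_u F(t·1_N) − ∂_u F((1−t)·1_N)] ≥ 16τ, then F(δ·1_N) + F((1−δ)·1_N) ≥ 16τ·(δ − ε). -/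
open Finset

theorem stmt_7 {N : Type*} [Fintype N] [DecidableEq N]
    (F : (N → ℝ) → ℝ) (F' : (N → ℝ) → ((N → ℝ) →L[ℝ] ℝ))
    (hdiff : ∀ x ∈ Set.Icc (0 : N → ℝ) 1, HasFDerivWithinAt F (F' x) (Set.Icc 0 1) x)
    (hnn : ∀ x ∈ Set.Icc (0 : N → ℝ) 1, 0 ≤ F x)
    (hanti : ∀ x ∈ Set.Icc (0 : N → ℝ) 1, ∀ y ∈ Set.Icc (0 : N → ℝ) 1, x ≤ y →
      ∀ u : N, F' y (Pi.single u 1) ≤ F' x (Pi.single u 1))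
    (ε τ δ : ℝ) (hε : 0 < ε) (hτ : 0 ≤ τ) (hδ : δ ∈ Set.Icc ε (1 / 2))
    (h : ∀ t ∈ Set.Ico (0 : ℝ) (δ - ε),
      16 * τ ≤
        ∑ u : N, (F' (fun _ => t) (Pi.single u 1) - F' (fun _ => 1 - t) (Pi.single u 1))) :
    16 * τ * (δ - ε) ≤ F (fun _ => δ) + F (fun _ => 1 - δ) := by
  obtain ⟨hεδ, hδ2⟩ := hδ
  set g : ℝ → ℝ := fun t => F (fun _ => t) + F (fun _ => 1 - t) with hgdef
  set ψ : ℝ → ℝ := fun t => F' (fun _ => t) 1 - F' (fun _ => 1 - t) 1 with hψdef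
  have hbox : ∀ t : ℝ, 0 ≤ t → t ≤ 1 → (fun _ : N => t) ∈ Set.Icc (0 : N → ℝ) 1 :=
    fun t h0 h1 => ⟨fun u => h0, fun u => h1⟩
  -- derivative of g within [0, 1/2]
  have hg : ∀ t ∈ Set.Icc (0 : ℝ) (1 / 2), HasDerivWithinAt g (ψ t) (Set.Icc 0 (1 / 2)) t := by
    intro t ht
    have ht1 : (fun _ : N => t) ∈ Set.Icc (0 : N → ℝ) 1 :=
      hbox t ht.1 (ht.2.trans (by norm_num))
    have ht2 : (fun _ : N => 1 - t) ∈ Set.Icc (0 : N → ℝ) 1 :=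
      hbox _ (by linarith [ht.2]) (by linarith [ht.1])
    have hf1 : HasDerivWithinAt (fun s : ℝ => (fun _ : N => s)) (1 : N → ℝ)
        (Set.Icc 0 (1 / 2)) t := by
      have heq : (fun s : ℝ => (fun _ : N => s)) = fun s : ℝ => s • (1 : N → ℝ) := by
        funext s u; simp
      rw [heq]
      simpa using (hasDerivWithinAt_id t (Set.Icc (0 : ℝ) (1 / 2))).smul_const (1 : N → ℝ)
    have hf2 : HasDerivWithinAt (fun s : ℝ => (fun _ : N => 1 - s)) (-1 : N → ℝ)
        (Set.Icc 0 (1 / 2)) t := by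
      have heq : (fun s : ℝ => (fun _ : N => (1 : ℝ) - s)) = fun s : ℝ => (1 - s) • (1 : N → ℝ) := by
        funext s u; simp
      rw [heq]
      have hc : HasDerivWithinAt (fun s : ℝ => (1 : ℝ) - s) (-1) (Set.Icc 0 (1 / 2)) t := by
        simpa using (hasDerivWithinAt_id t (Set.Icc (0 : ℝ) (1 / 2))).const_sub 1
      simpa using hc.smul_const (1 : N → ℝ)
    have hm1 : Set.MapsTo (fun s : ℝ => (fun _ : N => s)) (Set.Icc 0 (1 / 2))
        (Set.Icc (0 : N → ℝ) 1) := fun s hs => hbox s hs.1 (hs.2.trans (by norm_num))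
    have hm2 : Set.MapsTo (fun s : ℝ => (fun _ : N => 1 - s)) (Set.Icc 0 (1 / 2))
        (Set.Icc (0 : N → ℝ) 1) := fun s hs => hbox _ (by linarith [hs.2]) (by linarith [hs.1])
    have h1 := (hdiff _ ht1).comp_hasDerivWithinAt t hf1 hm1
    have h2 := (hdiff _ ht2).comp_hasDerivWithinAt t hf2 hm2
    have := h1.add h2
    simpa [hgdef, hψdef, Function.comp, Function.comp_def, Pi.add_def, sub_eq_add_neg] using this
  -- ψ as a sum over coordinates
  have hψsum : ∀ x : N → ℝ, F' x (1 : N → ℝ) = ∑ u : N, F' x (Pi.single u 1) := by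
    intro x
    have h1 : (1 : N → ℝ) = ∑ u : N, Pi.single u (1 : ℝ) := by
      simpa using (Finset.univ_sum_single (1 : N → ℝ)).symm
    rw [h1, map_sum]
  have hψ_eq : ∀ t : ℝ, ψ t = ∑ u : N,
      (F' (fun _ => t) (Pi.single u 1) - F' (fun _ => 1 - t) (Pi.single u 1)) := by
    intro t
    rw [hψdef]
    simp only [hψsum, Finset.sum_sub_distrib]
  have hsub : Set.Icc (0 : ℝ) (δ - ε) ⊆ Set.Icc 0 (1 / 2) :=
    Set.Icc_subset_Icc le_rfl (by linarith)
  -- Step 1: 16τ(δ-ε) ≤ g (δ-ε)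
  have hδε0 : 0 ≤ δ - ε := by linarith
  have step1 : 16 * τ * (δ - ε) ≤ g (δ - ε) := by
    rcases eq_or_lt_of_le hδε0 with heq | hlt
    · have : g (δ - ε) = g 0 := by rw [← heq]
      rw [this, ← heq]
      have := hnn _ (hbox 0 le_rfl zero_le_one)
      have h2 := hnn _ (hbox 1 zero_le_one le_rfl)
      simp only [hgdef]
      have e1 : (fun _ : N => (0:ℝ)) ∈ Set.Icc (0 : N → ℝ) 1 := hbox 0 le_rfl zero_le_one
      have e2 : (fun _ : N => (1:ℝ) - 0) ∈ Set.Icc (0 : N → ℝ) 1 := by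
        simpa using hbox 1 zero_le_one le_rfl
      nlinarith [hnn _ e1, hnn _ e2]
    · set g1 : ℝ → ℝ := fun t => g t - 16 * τ * t with hg1def
      have hmono : MonotoneOn g1 (Set.Icc 0 (δ - ε)) := by
        apply monotoneOn_of_hasDerivWithinAt_nonneg (convex_Icc _ _)
          (f' := fun t => ψ t - 16 * τ)
        · intro x hx
          exact (((hg x (hsub hx)).mono hsub).sub
            (((hasDerivWithinAt_id x _).const_mul (16 * τ)))).continuousWithinAt
        · intro x hx
          rw [interior_Icc] at hx
          have hx' : x ∈ Set.Icc (0 : ℝ) (δ - ε) := Set.Ioo_subset_Icc_self hx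
          have := ((hg x (hsub hx')).mono (Set.Subset.trans
            (interior_subset.trans hsub) (fun a ha => ha))).sub
            ((hasDerivWithinAt_id x _).const_mul (16 * τ))
          rw [interior_Icc]
          exact (((hg x (hsub hx')).mono
            ((Set.Ioo_subset_Icc_self).trans hsub)).sub
            ((hasDerivWithinAt_id x _).const_mul (16 * τ))).congr_deriv (by ring)
        · intro x hx
          rw [interior_Icc] at hx
          have hb := h x ⟨hx.1.le, hx.2⟩
          rw [← hψ_eq] at hb
          linarith
      have h01 : (0 : ℝ) ∈ Set.Icc (0 : ℝ) (δ - ε) := ⟨le_rfl, hδε0⟩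
      have h02 : (δ - ε) ∈ Set.Icc (0 : ℝ) (δ - ε) := ⟨hδε0, le_rfl⟩
      have := hmono h01 h02 hδε0
      have hg0 : 0 ≤ g 0 := by
        have e1 : (fun _ : N => (0:ℝ)) ∈ Set.Icc (0 : N → ℝ) 1 := hbox 0 le_rfl zero_le_one
        have e2 : (fun _ : N => (1:ℝ) - 0) ∈ Set.Icc (0 : N → ℝ) 1 :=
          hbox _ (by norm_num) (by norm_num)
        have := hnn _ e1
        have := hnn _ e2
        simp only [hgdef]; linarith
      simp only [hg1def] at this
      linarith
  -- Step 2: g (δ-ε) ≤ g δ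
  have step2 : g (δ - ε) ≤ g δ := by
    have hsub2 : Set.Icc (δ - ε) δ ⊆ Set.Icc (0 : ℝ) (1 / 2) :=
      Set.Icc_subset_Icc hδε0 hδ2
    have hmono : MonotoneOn g (Set.Icc (δ - ε) δ) := by
      apply monotoneOn_of_hasDerivWithinAt_nonneg (convex_Icc _ _) (f' := ψ)
      · intro x hx
        exact ((hg x (hsub2 hx)).mono hsub2).continuousWithinAt
      · intro x hx
        rw [interior_Icc] at hx ⊢
        exact (hg x (hsub2 (Set.Ioo_subset_Icc_self hx))).mono
          ((Set.Ioo_subset_Icc_self).trans hsub2)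
      · intro x hx
        rw [interior_Icc] at hx
        have hx' : x ∈ Set.Icc (0 : ℝ) (1 / 2) := hsub2 (Set.Ioo_subset_Icc_self hx)
        have hx1 : (fun _ : N => x) ∈ Set.Icc (0 : N → ℝ) 1 :=
          hbox x hx'.1 (hx'.2.trans (by norm_num))
        have hx2 : (fun _ : N => 1 - x) ∈ Set.Icc (0 : N → ℝ) 1 :=
          hbox _ (by linarith [hx'.2]) (by linarith [hx'.1])
        have hle : (fun _ : N => x) ≤ (fun _ : N => 1 - x) := fun u => by
          have := hx'.2; dsimp; linarith
        have := hanti _ hx1 _ hx2 hle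
        rw [hψ_eq]
        exact Finset.sum_nonneg fun u _ => sub_nonneg.2 (this u)
    exact hmono ⟨le_rfl, by linarith⟩ ⟨by linarith, le_rfl⟩ (by linarith)
  calc 16 * τ * (δ - ε) ≤ g (δ - ε) := step1
    _ ≤ g δ := step2
    _ = F (fun _ => δ) + F (fun _ => 1 - δ) := rfl
end

section
/- Let N be a finite set and let F: ℝ^N → ℝ be differentiable on the box [0,1]^N, non-negative on [0,1]^N, and have an antitone gradient on the box (i.e., ∇F(x) ≥ ∇F(y) coordinatewise whenever x ≤ y coordinatewise, x, y ∈ [0,1]^N). Then for every vector z ∈ [0,1]^N and every scalar δ ∈ [0,1], both F(z ∨ (δ·1_N)) ≥ (1−δ)·F(z) and F(z ∧ ((1−δ)·1_N)) ≥ (1−δ)·F(z) hold. -/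
open Set

/-- Antitone coordinatewise gradient gives antitone directional derivative in
nonnegative directions. -/
lemma grad_mono_aux {N : Type*} [Fintype N] [DecidableEq N]
    (F' : (N → ℝ) → ((N → ℝ) →L[ℝ] ℝ))
    (hanti : ∀ x ∈ Set.Icc (0 : N → ℝ) 1, ∀ y ∈ Set.Icc (0 : N → ℝ) 1, x ≤ y →
      ∀ u : N, F' y (Pi.single u 1) ≤ F' x (Pi.single u 1))
    {x y : N → ℝ} (hx : x ∈ Set.Icc (0 : N → ℝ) 1) (hy : y ∈ Set.Icc (0 : N → ℝ) 1)
    (hxy : x ≤ y) {d : N → ℝ} (hd : 0 ≤ d) : F' y d ≤ F' x d := by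
  have hrep : d = ∑ u : N, d u • (Pi.single u (1 : ℝ) : N → ℝ) := by
    ext j
    simp [Pi.single_apply]
  rw [hrep, map_sum, map_sum]
  refine Finset.sum_le_sum fun u _ => ?_
  rw [map_smul, map_smul]
  exact mul_le_mul_of_nonneg_left (hanti x hx y hy hxy u) (hd u)

/-- Mean value bounds along a monotone segment in the box. -/
lemma seg_bounds_aux {N : Type*} [Fintype N] [DecidableEq N]
    (F : (N → ℝ) → ℝ) (F' : (N → ℝ) → ((N → ℝ) →L[ℝ] ℝ))
    (hdiff : ∀ x ∈ Set.Icc (0 : N → ℝ) 1, HasFDerivWithinAt F (F' x) (Set.Icc 0 1) x)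
    (hanti : ∀ x ∈ Set.Icc (0 : N → ℝ) 1, ∀ y ∈ Set.Icc (0 : N → ℝ) 1, x ≤ y →
      ∀ u : N, F' y (Pi.single u 1) ≤ F' x (Pi.single u 1))
    {p q : N → ℝ} (hp : p ∈ Set.Icc (0 : N → ℝ) 1) (hq : q ∈ Set.Icc (0 : N → ℝ) 1)
    (hpq : p ≤ q) :
    F p + F' q (q - p) ≤ F q ∧ F q ≤ F p + F' p (q - p) := by
  have hd : (0 : N → ℝ) ≤ q - p := fun u => by
    have := hpq u; simp [Pi.sub_apply]; linarith
  set γ : ℝ → (N → ℝ) := fun s => p + s • (q - p) with hγ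
  have hγmem : ∀ s ∈ Set.Icc (0:ℝ) 1, p ≤ γ s ∧ γ s ≤ q := by
    intro s hs
    constructor
    · intro u
      have h1 := hd u
      have : (0:ℝ) ≤ s * (q u - p u) := mul_nonneg hs.1 (by simpa [Pi.sub_apply] using h1)
      simp only [hγ, Pi.add_apply, Pi.smul_apply, Pi.sub_apply, smul_eq_mul]
      linarith
    · intro u
      have h1 := hd u
      have h1' : (0:ℝ) ≤ q u - p u := by simpa [Pi.sub_apply] using h1
      have : s * (q u - p u) ≤ 1 * (q u - p u) := mul_le_mul_of_nonneg_right hs.2 h1'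
      simp only [hγ, Pi.add_apply, Pi.smul_apply, Pi.sub_apply, smul_eq_mul]
      linarith
  have hγbox : ∀ s ∈ Set.Icc (0:ℝ) 1, γ s ∈ Set.Icc (0 : N → ℝ) 1 := fun s hs =>
    ⟨le_trans hp.1 (hγmem s hs).1, le_trans (hγmem s hs).2 hq.2⟩
  have hγd : ∀ s : ℝ, HasDerivAt γ (q - p) s := fun s => by
    exact (((hasDerivAt_id s).smul_const (q - p)).const_add p).congr_deriv (one_smul ℝ _)
  set g : ℝ → ℝ := fun s => F (γ s) with hgdef
  have hg : ∀ s ∈ Set.Icc (0:ℝ) 1, HasDerivWithinAt g (F' (γ s) (q - p)) (Set.Icc 0 1) s := by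
    intro s hs
    exact (hdiff (γ s) (hγbox s hs)).comp_hasDerivWithinAt s ((hγd s).hasDerivWithinAt)
      (fun t ht => hγbox t ht)
  have hgcont : ContinuousOn g (Set.Icc (0:ℝ) 1) := fun s hs => (hg s hs).continuousWithinAt
  have hIoo : interior (Set.Icc (0:ℝ) 1) = Set.Ioo 0 1 := interior_Icc
  have h0 : (0:ℝ) ∈ Set.Icc (0:ℝ) 1 := by constructor <;> norm_num
  have h1 : (1:ℝ) ∈ Set.Icc (0:ℝ) 1 := by constructor <;> norm_num
  have hγ0 : γ 0 = p := by simp [hγ]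
  have hγ1 : γ 1 = q := by simp [hγ]
  constructor
  · -- lower bound: F p + F' q (q-p) ≤ F q
    have hmono : MonotoneOn (fun s => g s - s * F' q (q - p)) (Set.Icc (0:ℝ) 1) := by
      refine monotoneOn_of_hasDerivWithinAt_nonneg (convex_Icc 0 1)
        (hgcont.sub ((continuous_mul_right _).continuousOn))
        (f' := fun s => F' (γ s) (q - p) - F' q (q - p)) (fun s hs => ?_) (fun s hs => ?_)
      · rw [hIoo] at hs
        exact (((hg s (Set.mem_Icc_of_Ioo hs)).sub
          ((hasDerivAt_mul_const _).hasDerivWithinAt)).mono (by rw [hIoo]; exact Set.Ioo_subset_Icc_self))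
      · rw [hIoo] at hs
        have hsIcc := Set.mem_Icc_of_Ioo hs
        have := grad_mono_aux F' hanti (hγbox s hsIcc) hq (hγmem s hsIcc).2 hd
        linarith
    have h01 := hmono h0 h1 zero_le_one
    simp only [hgdef, hγ0, hγ1, zero_mul, one_mul, sub_zero] at h01
    linarith
  · -- upper bound: F q ≤ F p + F' p (q-p)
    have hmono : MonotoneOn (fun s => s * F' p (q - p) - g s) (Set.Icc (0:ℝ) 1) := by
      refine monotoneOn_of_hasDerivWithinAt_nonneg (convex_Icc 0 1)
        (((continuous_mul_right _).continuousOn).sub hgcont)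
        (f' := fun s => F' p (q - p) - F' (γ s) (q - p)) (fun s hs => ?_) (fun s hs => ?_)
      · rw [hIoo] at hs
        exact ((((hasDerivAt_mul_const _).hasDerivWithinAt).sub
          (hg s (Set.mem_Icc_of_Ioo hs))).mono (by rw [hIoo]; exact Set.Ioo_subset_Icc_self))
      · rw [hIoo] at hs
        have hsIcc := Set.mem_Icc_of_Ioo hs
        have := grad_mono_aux F' hanti hp (hγbox s hsIcc) (hγmem s hsIcc).1 hd
        linarith
    have h01 := hmono h0 h1 zero_le_one
    simp only [hgdef, hγ0, hγ1, zero_mul, one_mul, zero_sub] at h01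
    linarith

theorem stmt_8 {N : Type*} [Fintype N] [DecidableEq N]
    (F : (N → ℝ) → ℝ) (F' : (N → ℝ) → ((N → ℝ) →L[ℝ] ℝ))
    (hdiff : ∀ x ∈ Set.Icc (0 : N → ℝ) 1, HasFDerivWithinAt F (F' x) (Set.Icc 0 1) x)
    (hnn : ∀ x ∈ Set.Icc (0 : N → ℝ) 1, 0 ≤ F x)
    (hanti : ∀ x ∈ Set.Icc (0 : N → ℝ) 1, ∀ y ∈ Set.Icc (0 : N → ℝ) 1, x ≤ y →
      ∀ u : N, F' y (Pi.single u 1) ≤ F' x (Pi.single u 1))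
    (z : N → ℝ) (hz : z ∈ Set.Icc (0 : N → ℝ) 1) (δ : ℝ) (hδ : δ ∈ Set.Icc (0 : ℝ) 1) :
    (1 - δ) * F z ≤ F (z ⊔ fun _ => δ) ∧ (1 - δ) * F z ≤ F (z ⊓ fun _ => 1 - δ) := by
  obtain ⟨hδ0, hδ1⟩ := hδ
  constructor
  · -- F (z ⊔ δ1) ≥ (1-δ) F z
    set a : N → ℝ := z ⊔ fun _ => δ with ha
    have haz : z ≤ a := le_sup_left
    have habox : a ∈ Set.Icc (0 : N → ℝ) 1 := by
      constructor
      · exact le_trans hz.1 haz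
      · intro u
        simp only [ha, Pi.sup_apply, Pi.one_apply]
        exact max_le (hz.2 u) hδ1
    have hseg := seg_bounds_aux F F' hdiff hanti hz habox haz
    have key : F z + F' a (a - z) ≤ F a := hseg.1
    rcases eq_or_lt_of_le hδ0 with h0 | hδpos
    · -- δ = 0
      have : a = z := by
        ext u
        simp only [ha, Pi.sup_apply, ← h0]
        exact max_eq_left (hz.1 u)
      rw [this, ← h0]
      linarith
    · -- δ > 0
      set r : ℝ := (1 - δ) / δ with hr
      have hrnn : 0 ≤ r := div_nonneg (by linarith) (le_of_lt hδpos)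
      set q' : N → ℝ := a + r • (a - z) with hq'
      have hdz : (0 : N → ℝ) ≤ a - z := fun u => by
        have := haz u; simp [Pi.sub_apply]; linarith
      have haq' : a ≤ q' := by
        intro u
        have h1 : (0:ℝ) ≤ r * (a u - z u) := mul_nonneg hrnn (by simpa using hdz u)
        simp only [hq', Pi.add_apply, Pi.smul_apply, Pi.sub_apply, smul_eq_mul]
        linarith
      have hq'box : q' ∈ Set.Icc (0 : N → ℝ) 1 := by
        constructor
        · exact le_trans habox.1 haq'
        · intro u
          simp only [hq', Pi.add_apply, Pi.smul_apply, Pi.sub_apply, smul_eq_mul, Pi.one_apply]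
          rcases le_total δ (z u) with h | h
          · have hau : a u = z u := by simp [ha, Pi.sup_apply, max_eq_left h]
            rw [hau]
            simpa using hz.2 u
          · have hau : a u = δ := by simp [ha, Pi.sup_apply, max_eq_right h]
            rw [hau]
            have h2 : z u ≥ 0 := hz.1 u
            have h3 : r * (δ - z u) ≤ r * δ := by nlinarith
            have h4 : r * δ = 1 - δ := by rw [hr, div_mul_cancel₀ _ hδpos.ne']
            linarith
      have hseg2 := (seg_bounds_aux F F' hdiff hanti habox hq'box haq').2
      have hq'a : q' - a = r • (a - z) := by simp [hq']
      rw [hq'a, map_smul, smul_eq_mul] at hseg2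
      have hFq' : 0 ≤ F q' := hnn q' hq'box
      -- 0 ≤ F a + r * F' a (a - z)  ⇒  δ F a + (1-δ) F' a (a-z) ≥ 0
      have hbound : 0 ≤ δ * F a + (1 - δ) * F' a (a - z) := by
        have h5 : 0 ≤ F a + r * F' a (a - z) := by linarith
        have h6 : δ * (F a + r * F' a (a - z)) = δ * F a + (1 - δ) * F' a (a - z) := by
          have hrδ : δ * r = 1 - δ := by rw [mul_comm, hr, div_mul_cancel₀ _ hδpos.ne']
          linear_combination (F' a (a - z)) * hrδ
        nlinarith
      nlinarith [key, mul_le_mul_of_nonneg_left key (by linarith : (0:ℝ) ≤ 1 - δ)]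
  · -- F (z ⊓ (1-δ)1) ≥ (1-δ) F z
    set b : N → ℝ := z ⊓ fun _ => 1 - δ with hb
    have hbz : b ≤ z := inf_le_left
    have hbbox : b ∈ Set.Icc (0 : N → ℝ) 1 := by
      constructor
      · intro u
        simp only [hb, Pi.inf_apply, Pi.zero_apply]
        exact le_min (hz.1 u) (by linarith)
      · exact le_trans hbz hz.2
    have hseg := seg_bounds_aux F F' hdiff hanti hbbox hz hbz
    have key : F z ≤ F b + F' b (z - b) := hseg.2
    rcases eq_or_lt_of_le hδ0 with h0 | hδpos
    · have : b = z := by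
        ext u
        simp only [hb, Pi.inf_apply, ← h0]
        exact min_eq_left (by simpa using hz.2 u)
      rw [this, ← h0]
      linarith
    · set r : ℝ := (1 - δ) / δ with hr
      have hrnn : 0 ≤ r := div_nonneg (by linarith) (le_of_lt hδpos)
      set p' : N → ℝ := b - r • (z - b) with hp'
      have hdz : (0 : N → ℝ) ≤ z - b := fun u => by
        have := hbz u; simp [Pi.sub_apply]; linarith
      have hp'b : p' ≤ b := by
        intro u
        have h1 : (0:ℝ) ≤ r * (z u - b u) := mul_nonneg hrnn (by simpa using hdz u)
        simp only [hp', Pi.sub_apply, Pi.smul_apply, smul_eq_mul]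
        linarith
      have hp'box : p' ∈ Set.Icc (0 : N → ℝ) 1 := by
        constructor
        · intro u
          simp only [hp', Pi.sub_apply, Pi.smul_apply, smul_eq_mul, Pi.zero_apply]
          rcases le_total (z u) (1 - δ) with h | h
          · have hbu : b u = z u := by simp [hb, Pi.inf_apply, min_eq_left h]
            rw [hbu]
            simpa using hz.1 u
          · have hbu : b u = 1 - δ := by simp [hb, Pi.inf_apply, min_eq_right h]
            rw [hbu]
            have h2 : z u ≤ 1 := hz.2 u
            have h3 : r * (z u - (1 - δ)) ≤ r * δ := by nlinarith
            have h4 : r * δ = 1 - δ := by rw [hr, div_mul_cancel₀ _ hδpos.ne']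
            linarith
        · exact le_trans hp'b hbbox.2
      have hseg2 := (seg_bounds_aux F F' hdiff hanti hp'box hbbox hp'b).1
      have hbp' : b - p' = r • (z - b) := by simp [hp']
      rw [hbp', map_smul, smul_eq_mul] at hseg2
      have hFp' : 0 ≤ F p' := hnn p' hp'box
      -- F p' + r * F' b (z-b) ≤ F b  ⇒  (1-δ) F' b (z-b) ≤ δ F b
      have hbound : (1 - δ) * F' b (z - b) ≤ δ * F b := by
        have h5 : r * F' b (z - b) ≤ F b := by linarith
        have h6 : δ * (r * F' b (z - b)) = (1 - δ) * F' b (z - b) := by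
          have hrδ : δ * r = 1 - δ := by rw [mul_comm, hr, div_mul_cancel₀ _ hδpos.ne']
          linear_combination (F' b (z - b)) * hrδ
        nlinarith
      nlinarith [key, mul_le_mul_of_nonneg_left key (by linarith : (0:ℝ) ≤ 1 - δ)]
end

section
/- Let N be a finite set and let F: ℝ^N → ℝ be differentiable on the box [0,1]^N with an antitone gradient on the box (i.e., ∇F(x) ≥ ∇F(y) coordinatewise whenever x ≤ y coordinatewise, x, y ∈ [0,1]^N). Let x ∈ [0,1]^N and let d ∈ ℝ^N with d ≥ 0 coordinatewise and x + d ∈ [0,1]^N. Then the function g(t) := F(x + t·d) is concave on the interval [0,1]. -/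
theorem stmt_9 {N : Type*} [Fintype N] [DecidableEq N]
    (F : (N → ℝ) → ℝ) (F' : (N → ℝ) → ((N → ℝ) →L[ℝ] ℝ))
    (hdiff : ∀ x ∈ Set.Icc (0 : N → ℝ) 1, HasFDerivWithinAt F (F' x) (Set.Icc 0 1) x)
    (hanti : ∀ x ∈ Set.Icc (0 : N → ℝ) 1, ∀ y ∈ Set.Icc (0 : N → ℝ) 1, x ≤ y →
      ∀ u : N, F' y (Pi.single u 1) ≤ F' x (Pi.single u 1))
    (x d : N → ℝ) (hx : x ∈ Set.Icc (0 : N → ℝ) 1) (hd : 0 ≤ d)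
    (hxd : x + d ∈ Set.Icc (0 : N → ℝ) 1) :
    ConcaveOn ℝ (Set.Icc (0 : ℝ) 1) (fun t : ℝ => F (x + t • d)) := by
  have hmem : ∀ t ∈ Set.Icc (0:ℝ) 1, x + t • d ∈ Set.Icc (0 : N → ℝ) 1 := by
    intro t ht
    constructor
    · intro u
      have h1 : (0:ℝ) ≤ x u := hx.1 u
      have h2 : (0:ℝ) ≤ t * d u := mul_nonneg ht.1 (hd u)
      simpa using add_nonneg h1 h2
    · intro u
      have h1 : t * d u ≤ d u := by
        have := mul_le_mul_of_nonneg_right ht.2 (hd u)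
        simpa using this
      have h2 : x u + d u ≤ 1 := hxd.2 u
      have : x u + t * d u ≤ 1 := by linarith
      simpa using this
  have hg : ∀ t ∈ Set.Icc (0:ℝ) 1,
      HasDerivWithinAt (fun t : ℝ => F (x + t • d)) (F' (x + t • d) d) (Set.Icc 0 1) t := by
    intro t ht
    have hL : HasDerivWithinAt (fun t : ℝ => x + t • d) d (Set.Icc 0 1) t := by
      have : HasDerivAt (fun t : ℝ => x + t • d) ((1:ℝ) • d) t :=
        ((hasDerivAt_id t).smul_const d).const_add x
      simpa using this.hasDerivWithinAt
    exact (hdiff _ (hmem t ht)).comp_hasDerivWithinAt t hL (fun s hs => hmem s hs)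
  have key : ∀ v : N → ℝ, (F' v) d = ∑ u, d u * F' v (Pi.single u 1) := by
    intro v
    have hd' : d = ∑ u, d u • (Pi.single u 1 : N → ℝ) := by
      ext j
      simp [Pi.single_apply]
    conv_lhs => rw [hd']
    simp [map_sum, smul_eq_mul]
  have hanti' : AntitoneOn (deriv (fun t : ℝ => F (x + t • d))) (interior (Set.Icc (0:ℝ) 1)) := by
    rw [interior_Icc]
    intro a ha b hb hab
    have hderiv : ∀ t ∈ Set.Ioo (0:ℝ) 1,
        deriv (fun t : ℝ => F (x + t • d)) t = F' (x + t • d) d := by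
      intro t ht
      have hnhds : Set.Icc (0:ℝ) 1 ∈ nhds t := Icc_mem_nhds ht.1 ht.2
      exact ((hg t (Set.Ioo_subset_Icc_self ht)).hasDerivAt hnhds).deriv
    rw [hderiv a ha, hderiv b hb]
    rw [key, key]
    apply Finset.sum_le_sum
    intro u _
    refine mul_le_mul_of_nonneg_left ?_ (hd u)
    refine hanti _ (hmem a (Set.Ioo_subset_Icc_self ha)) _ (hmem b (Set.Ioo_subset_Icc_self hb)) ?_ u
    intro j
    have : a * d j ≤ b * d j := mul_le_mul_of_nonneg_right hab (hd j)
    simpa using this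
  exact AntitoneOn.concaveOn_of_deriv (convex_Icc 0 1)
    (fun t ht => (hg t ht).continuousWithinAt)
    (fun t ht => by
      rw [interior_Icc] at ht
      exact ((hg t (Set.Ioo_subset_Icc_self ht)).hasDerivAt
        (Icc_mem_nhds ht.1 ht.2)).differentiableAt.differentiableWithinAt)
    hanti'
end

section
/- Let N be a finite set and let F: ℝ^N → ℝ be differentiable on the box [0,1]^N, non-negative on [0,1]^N, and have an antitone gradient on the box (i.e., ∇F(x) ≥ ∇F(y) coordinatewise whenever x ≤ y coordinatewise, x, y ∈ [0,1]^N). Then F((1/2)·1_N) ≥ (1/4)·F(z) for every z ∈ [0,1]^N. -/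
set_option maxHeartbeats 1000000

section Aux

variable {N : Type*} [Fintype N] [DecidableEq N]
  (F : (N → ℝ) → ℝ) (F' : (N → ℝ) → ((N → ℝ) →L[ℝ] ℝ))

/-- Gradient comparison for nonnegative directions. -/
lemma grad_le
    (hanti : ∀ x ∈ Set.Icc (0 : N → ℝ) 1, ∀ y ∈ Set.Icc (0 : N → ℝ) 1, x ≤ y →
      ∀ u : N, F' y (Pi.single u 1) ≤ F' x (Pi.single u 1))
    {p q d : N → ℝ} (hp : p ∈ Set.Icc (0 : N → ℝ) 1) (hq : q ∈ Set.Icc (0 : N → ℝ) 1)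
    (hpq : p ≤ q) (hd : 0 ≤ d) : F' q d ≤ F' p d := by
  have hdecomp : d = ∑ u : N, d u • (Pi.single u 1 : N → ℝ) := by
    conv_lhs => rw [← Finset.univ_sum_single d]
    refine Finset.sum_congr rfl fun u _ => ?_
    ext v
    by_cases hv : v = u <;> simp [hv, Pi.single_apply]
  rw [hdecomp, map_sum, map_sum]
  refine Finset.sum_le_sum fun u _ => ?_
  rw [map_smul, map_smul]
  exact smul_le_smul_of_nonneg_left (hanti p hp q hq hpq u) (hd u)

/-- Points on the segment from `x` to `x + d` stay in the box. -/
lemma seg_mem_box {x d : N → ℝ} (hx : x ∈ Set.Icc (0 : N → ℝ) 1)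
    (hxd : x + d ∈ Set.Icc (0 : N → ℝ) 1) {t : ℝ} (ht : t ∈ Set.Icc (0 : ℝ) 1) :
    x + t • d ∈ Set.Icc (0 : N → ℝ) 1 := by
  have h := (convex_Icc (0 : N → ℝ) 1).add_smul_sub_mem hx hxd ht
  simpa using h

/-- Key lemma: increments of `F` decrease as the base point increases. -/
lemma key_incr
    (hdiff : ∀ x ∈ Set.Icc (0 : N → ℝ) 1, HasFDerivWithinAt F (F' x) (Set.Icc 0 1) x)
    (hanti : ∀ x ∈ Set.Icc (0 : N → ℝ) 1, ∀ y ∈ Set.Icc (0 : N → ℝ) 1, x ≤ y →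
      ∀ u : N, F' y (Pi.single u 1) ≤ F' x (Pi.single u 1))
    {x y d : N → ℝ} (hx : x ∈ Set.Icc (0 : N → ℝ) 1) (hy : y ∈ Set.Icc (0 : N → ℝ) 1)
    (hxd : x + d ∈ Set.Icc (0 : N → ℝ) 1) (hyd : y + d ∈ Set.Icc (0 : N → ℝ) 1)
    (hxy : x ≤ y) (hd : 0 ≤ d) :
    F (y + d) - F y ≤ F (x + d) - F x := by
  set box : Set (N → ℝ) := Set.Icc (0 : N → ℝ) 1 with hbox
  have hFc : ContinuousOn F box := fun w hw => (hdiff w hw).continuousWithinAt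
  have hpathx : ∀ t : ℝ, HasDerivAt (fun s : ℝ => x + s • d) d t := by
    intro t
    simpa using ((hasDerivAt_id t).smul_const d).const_add x
  have hpathy : ∀ t : ℝ, HasDerivAt (fun s : ℝ => y + s • d) d t := by
    intro t
    simpa using ((hasDerivAt_id t).smul_const d).const_add y
  have hmapx : Set.MapsTo (fun s : ℝ => x + s • d) (Set.Icc (0:ℝ) 1) box :=
    fun t ht => seg_mem_box hx hxd ht
  have hmapy : Set.MapsTo (fun s : ℝ => y + s • d) (Set.Icc (0:ℝ) 1) box :=
    fun t ht => seg_mem_box hy hyd ht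
  have hmapx' : Set.MapsTo (fun s : ℝ => x + s • d) (Set.Ioo (0:ℝ) 1) box :=
    fun t ht => hmapx (Set.Ioo_subset_Icc_self ht)
  have hmapy' : Set.MapsTo (fun s : ℝ => y + s • d) (Set.Ioo (0:ℝ) 1) box :=
    fun t ht => hmapy (Set.Ioo_subset_Icc_self ht)
  have hcx : Continuous fun s : ℝ => x + s • d :=
    continuous_const.add (continuous_id.smul continuous_const)
  have hcy : Continuous fun s : ℝ => y + s • d :=
    continuous_const.add (continuous_id.smul continuous_const)
  set h : ℝ → ℝ := fun t => F (x + t • d) - F (y + t • d) with hh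
  set h' : ℝ → ℝ := fun t => F' (x + t • d) d - F' (y + t • d) d with hh'
  have hcont : ContinuousOn h (Set.Icc (0:ℝ) 1) :=
    (hFc.comp hcx.continuousOn hmapx).sub (hFc.comp hcy.continuousOn hmapy)
  have hderiv : ∀ t ∈ interior (Set.Icc (0:ℝ) 1),
      HasDerivWithinAt h (h' t) (interior (Set.Icc (0:ℝ) 1)) t := by
    intro t ht
    rw [interior_Icc] at ht ⊢
    have h1 : HasDerivWithinAt (fun s : ℝ => F (x + s • d)) (F' (x + t • d) d)
        (Set.Ioo (0:ℝ) 1) t :=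
      (hdiff _ (hmapx' ht)).comp_hasDerivWithinAt t
        ((hpathx t).hasDerivWithinAt) hmapx'
    have h2 : HasDerivWithinAt (fun s : ℝ => F (y + s • d)) (F' (y + t • d) d)
        (Set.Ioo (0:ℝ) 1) t :=
      (hdiff _ (hmapy' ht)).comp_hasDerivWithinAt t
        ((hpathy t).hasDerivWithinAt) hmapy'
    exact h1.sub h2
  have hpos : ∀ t ∈ interior (Set.Icc (0:ℝ) 1), 0 ≤ h' t := by
    intro t ht
    rw [interior_Icc] at ht
    have hle : x + t • d ≤ y + t • d := fun u => by
      have h1 : x u ≤ y u := hxy u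
      simp only [Pi.add_apply, Pi.smul_apply, smul_eq_mul]
      linarith
    have := grad_le F' hanti (hmapx' ht) (hmapy' ht) hle hd
    simp only [hh', sub_nonneg]
    exact this
  have hmono : MonotoneOn h (Set.Icc (0:ℝ) 1) :=
    monotoneOn_of_hasDerivWithinAt_nonneg (convex_Icc 0 1) hcont hderiv hpos
  have h01 : h 0 ≤ h 1 := hmono (Set.mem_Icc.2 ⟨le_refl 0, zero_le_one⟩)
    (Set.mem_Icc.2 ⟨zero_le_one, le_refl 1⟩) zero_le_one
  simp only [hh, zero_smul, add_zero, one_smul] at h01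
  linarith

end Aux

theorem stmt_10 {N : Type*} [Fintype N] [DecidableEq N]
    (F : (N → ℝ) → ℝ) (F' : (N → ℝ) → ((N → ℝ) →L[ℝ] ℝ))
    (hdiff : ∀ x ∈ Set.Icc (0 : N → ℝ) 1, HasFDerivWithinAt F (F' x) (Set.Icc 0 1) x)
    (hnn : ∀ x ∈ Set.Icc (0 : N → ℝ) 1, 0 ≤ F x)
    (hanti : ∀ x ∈ Set.Icc (0 : N → ℝ) 1, ∀ y ∈ Set.Icc (0 : N → ℝ) 1, x ≤ y →
      ∀ u : N, F' y (Pi.single u 1) ≤ F' x (Pi.single u 1)) :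
    ∀ z ∈ Set.Icc (0 : N → ℝ) 1, (1 / 4 : ℝ) * F z ≤ F (fun _ => (1 / 2 : ℝ)) := by
  intro z hz
  set c : N → ℝ := fun _ => (1/2 : ℝ) with hc
  have hz0 : (0 : N → ℝ) ≤ z := hz.1
  have hz1 : z ≤ 1 := hz.2
  have hcmem : c ∈ Set.Icc (0 : N → ℝ) 1 :=
    ⟨fun u => by norm_num [hc], fun u => by norm_num [hc]⟩
  -- Step A: for any w ∈ [0, ½]ᴺ, F w ≤ 2 F c
  have stepA : ∀ w : N → ℝ, 0 ≤ w → w ≤ c → F w ≤ 2 * F c := by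
    intro w hw0 hwc
    have hwmem : w ∈ Set.Icc (0 : N → ℝ) 1 :=
      ⟨hw0, fun u => le_trans (hwc u) (by norm_num [hc])⟩
    have hd0 : (0 : N → ℝ) ≤ c - w := fun u => by
      have h2 : w u ≤ c u := hwc u
      simp only [Pi.sub_apply, Pi.zero_apply]; linarith
    have hwdc : w + (c - w) = c := by abel
    have hwd : w + (c - w) ∈ Set.Icc (0 : N → ℝ) 1 := by
      rw [hwdc]; exact hcmem
    have hcd : c + (c - w) ∈ Set.Icc (0 : N → ℝ) 1 := by
      refine ⟨fun u => ?_, fun u => ?_⟩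
      · have h1 : (0:ℝ) ≤ w u := hw0 u
        have h2 : w u ≤ (1:ℝ)/2 := hwc u
        simp only [Pi.add_apply, Pi.sub_apply, Pi.zero_apply, hc]
        linarith
      · have h1 : (0:ℝ) ≤ w u := hw0 u
        simp only [Pi.add_apply, Pi.sub_apply, Pi.one_apply, hc]
        linarith
    have key := key_incr F F' hdiff hanti hwmem hcmem hwd hcd hwc hd0
    rw [hwdc] at key
    have hnncd : 0 ≤ F (c + (c - w)) := hnn _ hcd
    linarith
  -- Step B: F z ≤ F a + F (z - a) - F 0, where a = z ⊓ c
  set a : N → ℝ := fun u => min (z u) (1/2 : ℝ) with ha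
  have ha0 : (0 : N → ℝ) ≤ a := fun u => le_min (hz0 u) (by norm_num)
  have hac : a ≤ c := fun u => min_le_right _ _
  have haz : a ≤ z := fun u => min_le_left _ _
  have hamem : a ∈ Set.Icc (0 : N → ℝ) 1 :=
    ⟨ha0, fun u => le_trans (hac u) (by norm_num [hc])⟩
  have hd0 : (0 : N → ℝ) ≤ z - a := fun u => by
    have h1 : a u ≤ z u := haz u
    simp only [Pi.sub_apply, Pi.zero_apply]; linarith
  have hza_le_c : z - a ≤ c := by
    intro u
    simp only [Pi.sub_apply, ha, hc]
    rcases le_total (z u) (1/2 : ℝ) with h | h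
    · rw [min_eq_left h]; simp
    · rw [min_eq_right h]
      have h1 : z u ≤ 1 := hz1 u
      linarith
  have hzamem : z - a ∈ Set.Icc (0 : N → ℝ) 1 :=
    ⟨hd0, fun u => le_trans (hza_le_c u) (by norm_num [hc])⟩
  have h0mem : (0 : N → ℝ) ∈ Set.Icc (0 : N → ℝ) 1 :=
    ⟨le_refl _, fun u => by norm_num⟩
  have e1 : a + (z - a) = z := by abel
  have e2 : (0 : N → ℝ) + (z - a) = z - a := by abel
  have h0d : (0 : N → ℝ) + (z - a) ∈ Set.Icc (0 : N → ℝ) 1 := by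
    rw [e2]; exact hzamem
  have had : a + (z - a) ∈ Set.Icc (0 : N → ℝ) 1 := by
    rw [e1]; exact hz
  have keyB := key_incr F F' hdiff hanti h0mem hamem h0d had ha0 hd0
  rw [e1, e2] at keyB
  -- Combine
  have hFa : F a ≤ 2 * F c := stepA a ha0 hac
  have hFza : F (z - a) ≤ 2 * F c := stepA (z - a) hd0 hza_le_c
  have hF0 : 0 ≤ F 0 := hnn _ h0mem
  linarith
end

section
/- Let N be a finite set and let F: ℝ^N → ℝ be differentiable on the box [0,1]^N, non-negative on [0,1]^N, and have an antitone gradient on the box (i.e., ∇F(x) ≥ ∇F(y) coordinatewise whenever x ≤ y coordinatewise, x, y ∈ [0,1]^N). Then for every z ∈ [0,1]^N and δ ∈ [0,1], F((z ∨ (δ·1_N)) ∧ ((1−δ)·1_N)) ≥ (1 − 2δ)·F(z). -/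
open Finset Set

lemma apply_eq_sum {N : Type*} [Fintype N] [DecidableEq N]
    (L : (N → ℝ) →L[ℝ] ℝ) (d : N → ℝ) :
    L d = ∑ u, d u * L (Pi.single u 1) := by
  conv_lhs => rw [← Finset.univ_sum_single d]
  rw [map_sum]
  refine Finset.sum_congr rfl fun u _ => ?_
  have : (Pi.single u (d u) : N → ℝ) = d u • (Pi.single u 1 : N → ℝ) := by
    rw [← Pi.single_smul, smul_eq_mul, mul_one]
  rw [this, map_smul, smul_eq_mul]

lemma key {N : Type*} [Fintype N] [DecidableEq N]
    (F : (N → ℝ) → ℝ) (F' : (N → ℝ) → ((N → ℝ) →L[ℝ] ℝ))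
    (hdiff : ∀ x ∈ Set.Icc (0 : N → ℝ) 1, HasFDerivWithinAt F (F' x) (Set.Icc 0 1) x)
    (hanti : ∀ x ∈ Set.Icc (0 : N → ℝ) 1, ∀ y ∈ Set.Icc (0 : N → ℝ) 1, x ≤ y →
      ∀ u : N, F' y (Pi.single u 1) ≤ F' x (Pi.single u 1))
    {a b : N → ℝ} (ha : a ∈ Set.Icc (0 : N → ℝ) 1) (hb : b ∈ Set.Icc (0 : N → ℝ) 1)
    (hab : a ≤ b) :
    F a + F' b (b - a) ≤ F b ∧ F b ≤ F a + F' a (b - a) := by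
  set c : ℝ → (N → ℝ) := fun t => a + t • (b - a) with hc
  have hc0 : c 0 = a := by simp [hc]
  have hc1 : c 1 = b := by
    funext u; simp [hc]
  have hmem : ∀ t ∈ Set.Icc (0:ℝ) 1, c t ∈ Set.Icc (0 : N → ℝ) 1 := by
    intro t ht
    constructor <;> intro u
    · have h1 := ha.1 u; have h2 := hb.1 u
      simp only [Pi.zero_apply] at h1 h2 ⊢
      simp only [hc, Pi.add_apply, Pi.smul_apply, Pi.sub_apply, smul_eq_mul]
      nlinarith [ht.1, ht.2, mul_nonneg ht.1 h2, mul_nonneg ht.1 h1]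
    · have h1 := ha.2 u; have h2 := hb.2 u
      simp only [Pi.one_apply] at h1 h2 ⊢
      simp only [hc, Pi.add_apply, Pi.smul_apply, Pi.sub_apply, smul_eq_mul]
      nlinarith [ht.1, ht.2]
  have hder : ∀ t ∈ Set.Icc (0:ℝ) 1,
      HasDerivWithinAt (fun s => F (c s)) (F' (c t) (b - a)) (Set.Icc 0 1) t := by
    intro t ht
    have hcd : HasDerivWithinAt c (b - a) (Set.Icc 0 1) t := by
      have : HasDerivAt c ((1:ℝ) • (b - a)) t :=
        ((hasDerivAt_id t).smul_const (b - a)).const_add a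
      simpa using this.hasDerivWithinAt
    exact (hdiff _ (hmem t ht)).comp_hasDerivWithinAt t hcd hmem
  have hcmp : ∀ s ∈ Set.Icc (0:ℝ) 1, ∀ t ∈ Set.Icc (0:ℝ) 1, s ≤ t →
      F' (c t) (b - a) ≤ F' (c s) (b - a) := by
    intro s hs t ht hst
    have hle : c s ≤ c t := by
      intro u
      simp only [hc, Pi.add_apply, Pi.smul_apply, Pi.sub_apply, smul_eq_mul]
      nlinarith [hab u, hst]
    rw [apply_eq_sum, apply_eq_sum]
    refine Finset.sum_le_sum fun u _ => ?_
    have := hanti (c s) (hmem s hs) (c t) (hmem t ht) hle u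
    have hd : 0 ≤ (b - a) u := sub_nonneg.2 (hab u)
    exact mul_le_mul_of_nonneg_left this hd
  constructor
  · -- F a + F' b (b-a) ≤ F b, via ψ t = F (c t) - t * D1 monotone
    set D1 := F' b (b - a) with hD1
    have hψ : ∀ t ∈ Set.Icc (0:ℝ) 1,
        HasDerivWithinAt (fun s => F (c s) - s * D1) (F' (c t) (b - a) - D1) (Set.Icc 0 1) t :=
      fun t ht => (hder t ht).sub ((hasDerivAt_id t).mul_const D1).hasDerivWithinAt |>.congr_deriv
        (by ring)
    have hmono : MonotoneOn (fun s => F (c s) - s * D1) (Set.Icc (0:ℝ) 1) := by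
      apply monotoneOn_of_hasDerivWithinAt_nonneg (convex_Icc 0 1)
        (fun t ht => (hψ t ht).continuousWithinAt)
        (fun t ht => (hψ t (interior_subset ht)).mono interior_subset)
      intro t ht
      have ht' : t ∈ Set.Icc (0:ℝ) 1 := interior_subset ht
      have := hcmp t ht' 1 (by norm_num) ht'.2
      rw [hc1] at this
      linarith
    have := hmono (Set.mem_Icc.2 ⟨le_refl 0, zero_le_one⟩) (Set.mem_Icc.2 ⟨zero_le_one, le_refl 1⟩)
      zero_le_one
    simp only [hc0, hc1] at this
    linarith
  · -- F b ≤ F a + F' a (b-a), via φ t = F a + t * D0 - F (c t) monotone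
    set D0 := F' a (b - a) with hD0
    have hφ : ∀ t ∈ Set.Icc (0:ℝ) 1,
        HasDerivWithinAt (fun s => F a + s * D0 - F (c s)) (D0 - F' (c t) (b - a))
          (Set.Icc 0 1) t :=
      fun t ht => ((((hasDerivAt_id t).mul_const D0).const_add (F a)).hasDerivWithinAt.sub
        (hder t ht)).congr_deriv (by ring)
    have hmono : MonotoneOn (fun s => F a + s * D0 - F (c s)) (Set.Icc (0:ℝ) 1) := by
      apply monotoneOn_of_hasDerivWithinAt_nonneg (convex_Icc 0 1)
        (fun t ht => (hφ t ht).continuousWithinAt)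
        (fun t ht => (hφ t (interior_subset ht)).mono interior_subset)
      intro t ht
      have ht' : t ∈ Set.Icc (0:ℝ) 1 := interior_subset ht
      have := hcmp 0 (by norm_num) t ht' ht'.1
      rw [hc0] at this
      linarith
    have := hmono (Set.mem_Icc.2 ⟨le_refl 0, zero_le_one⟩) (Set.mem_Icc.2 ⟨zero_le_one, le_refl 1⟩)
      zero_le_one
    simp only [hc0, hc1] at this
    linarith
theorem stmt_11 {N : Type*} [Fintype N] [DecidableEq N]
    (F : (N → ℝ) → ℝ) (F' : (N → ℝ) → ((N → ℝ) →L[ℝ] ℝ))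
    (hdiff : ∀ x ∈ Set.Icc (0 : N → ℝ) 1, HasFDerivWithinAt F (F' x) (Set.Icc 0 1) x)
    (hnn : ∀ x ∈ Set.Icc (0 : N → ℝ) 1, 0 ≤ F x)
    (hanti : ∀ x ∈ Set.Icc (0 : N → ℝ) 1, ∀ y ∈ Set.Icc (0 : N → ℝ) 1, x ≤ y →
      ∀ u : N, F' y (Pi.single u 1) ≤ F' x (Pi.single u 1))
    (z : N → ℝ) (hz : z ∈ Set.Icc (0 : N → ℝ) 1) (δ : ℝ) (hδ : δ ∈ Set.Icc (0 : ℝ) 1) :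
    (1 - 2 * δ) * F z ≤ F ((z ⊔ fun _ => δ) ⊓ fun _ => 1 - δ) := by
  obtain ⟨hδ0, hδ1⟩ := hδ
  set x : N → ℝ := z ⊔ fun _ => δ with hxdef
  set y : N → ℝ := x ⊓ fun _ => 1 - δ with hydef
  have hxu : ∀ u, x u = z u ⊔ δ := fun u => rfl
  have hyu : ∀ u, y u = x u ⊓ (1 - δ) := fun u => rfl
  have hz0 : ∀ u, (0:ℝ) ≤ z u := fun u => hz.1 u
  have hz1 : ∀ u, z u ≤ 1 := fun u => hz.2 u
  have hx0 : ∀ u, (0:ℝ) ≤ x u := by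
    intro u; rw [hxu u]; exact le_trans hδ0 le_sup_right
  have hx1 : ∀ u, x u ≤ 1 := by
    intro u; rw [hxu u]; exact sup_le (hz1 u) hδ1
  have hy0 : ∀ u, (0:ℝ) ≤ y u := by
    intro u; rw [hyu u]; exact le_inf (hx0 u) (by linarith)
  have hy1 : ∀ u, y u ≤ 1 := by
    intro u; rw [hyu u]; exact le_trans inf_le_left (hx1 u)
  have hy01 : y ∈ Set.Icc (0 : N → ℝ) 1 := ⟨fun u => hy0 u, fun u => hy1 u⟩
  rcases le_or_gt δ (1/2) with hhalf | hhalf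
  · have h1δ : (0:ℝ) ≤ 1 - δ := by linarith
    have hx01 : x ∈ Set.Icc (0 : N → ℝ) 1 := ⟨fun u => hx0 u, fun u => hx1 u⟩
    have hzx : z ≤ x := le_sup_left
    have hyx : y ≤ x := inf_le_left
    -- Step 1: F x ≥ (1-δ) * F z
    obtain ⟨h1, _⟩ := key F F' hdiff hanti hz hx01 hzx
    have hstep1 : (1 - δ) * F z ≤ F x := by
      set v : N → ℝ :=
        fun u => if z u < δ ∧ F' x (Pi.single u 1) < 0 then 1 - δ else 0 with hv
      have hxv01 : x + v ∈ Set.Icc (0 : N → ℝ) 1 := by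
        constructor <;> intro u <;>
          simp only [Pi.add_apply, Pi.zero_apply, Pi.one_apply, hv]
        · split
          · have := hx0 u; linarith
          · have := hx0 u; linarith
        · split
          · rename_i h
            have hxe : x u = δ := by rw [hxu u]; exact sup_eq_right.mpr h.1.le
            rw [hxe]; linarith
          · have := hx1 u; linarith
      have hxxv : x ≤ x + v := by
        intro u; simp only [Pi.add_apply, hv]; split <;> linarith
      obtain ⟨_, h2⟩ := key F F' hdiff hanti hx01 hxv01 hxxv
      rw [add_sub_cancel_left] at h2
      have hFv : -F x ≤ F' x v := by
        have := hnn _ hxv01; linarith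
      have hsum : δ * F' x v ≤ (1 - δ) * F' x (x - z) := by
        rw [apply_eq_sum (F' x) v, apply_eq_sum (F' x) (x - z), Finset.mul_sum,
          Finset.mul_sum]
        refine Finset.sum_le_sum fun u _ => ?_
        simp only [Pi.sub_apply, hv]
        split
        · rename_i h
          have hxe : x u = δ := by rw [hxu u]; exact sup_eq_right.mpr h.1.le
          rw [hxe]
          nlinarith [mul_nonneg (mul_nonneg h1δ (hz0 u)) (by linarith [h.2] :
            (0:ℝ) ≤ -(F' x (Pi.single u 1)))]
        · rename_i h
          push_neg at h
          rcases lt_or_ge (z u) δ with hc | hc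
          · have hG := h hc
            have hxz : (0:ℝ) ≤ x u - z u := sub_nonneg.2 (hzx u)
            nlinarith [mul_nonneg hxz hG]
          · have hxe : x u = z u := by rw [hxu u]; exact sup_eq_left.mpr hc
            rw [hxe]; simp
      nlinarith [mul_le_mul_of_nonneg_left h1 h1δ]
    -- Step 2: F y ≥ (1-δ) * F x
    obtain ⟨_, h3'⟩ := key F F' hdiff hanti hy01 hx01 hyx
    have hstep2 : (1 - δ) * F x ≤ F y := by
      set w : N → ℝ :=
        fun u => if 1 - δ < x u ∧ 0 < F' y (Pi.single u 1) then 1 - δ else 0 with hw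
      have hyw01 : y - w ∈ Set.Icc (0 : N → ℝ) 1 := by
        constructor <;> intro u <;>
          simp only [Pi.sub_apply, Pi.zero_apply, Pi.one_apply, hw]
        · split
          · rename_i h
            have hye : y u = 1 - δ := by rw [hyu u]; exact inf_eq_right.mpr h.1.le
            rw [hye]; linarith
          · have := hy0 u; linarith
        · split
          · have := hy1 u; linarith
          · have := hy1 u; linarith
      have hwy : y - w ≤ y := by
        intro u; simp only [Pi.sub_apply, hw]; split <;> linarith
      obtain ⟨h4, _⟩ := key F F' hdiff hanti hyw01 hy01 hwy
      rw [sub_sub_cancel] at h4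
      have hFw : F' y w ≤ F y := by
        have := hnn _ hyw01; linarith
      have hsum : (1 - δ) * F' y (x - y) ≤ δ * F' y w := by
        rw [apply_eq_sum (F' y) w, apply_eq_sum (F' y) (x - y), Finset.mul_sum,
          Finset.mul_sum]
        refine Finset.sum_le_sum fun u _ => ?_
        simp only [Pi.sub_apply, hw]
        split
        · rename_i h
          have hye : y u = 1 - δ := by rw [hyu u]; exact inf_eq_right.mpr h.1.le
          rw [hye]
          nlinarith [mul_nonneg (mul_nonneg h1δ (by linarith [hx1 u] :
            (0:ℝ) ≤ 1 - x u)) h.2.le]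
        · rename_i h
          push_neg at h
          rcases lt_or_ge (1 - δ) (x u) with hc | hc
          · have hG := h hc
            have hye : y u = 1 - δ := by rw [hyu u]; exact inf_eq_right.mpr hc.le
            rw [hye]
            nlinarith [mul_nonneg (by linarith : (0:ℝ) ≤ x u - (1 - δ)) (neg_nonneg.2 hG),
              hx1 u]
          · have hye : y u = x u := by rw [hyu u]; exact inf_eq_left.mpr hc
            rw [hye]; simp
      nlinarith [mul_le_mul_of_nonneg_left h3' h1δ]
    have hFz := hnn z hz
    nlinarith [mul_le_mul_of_nonneg_left hstep1 h1δ,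
      mul_nonneg (mul_nonneg hδ0 hδ0) hFz]
  · have h1 : (1 - 2 * δ) * F z ≤ 0 :=
      mul_nonpos_of_nonpos_of_nonneg (by linarith) (hnn z hz)
    exact le_trans h1 (hnn _ hy01)
end

section
/- Let f be a submodular set function on a finite ground set N, let X ⊆ Y ⊆ N, and define Z := X ∪ {u ∈ Y ∖ X : f(X ∪ {u}) − f(X) > 0}. Then for every set W with X ⊆ W ⊆ Y, it holds that f(Z) ≥ f(W) − Σ_{u ∈ Y∖X} [(f(X ∪ {u}) − f(X)) − (f(Y) − f(Y ∖ {u}))]. -/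
open Finset

private lemma lemA {N : Type*} [DecidableEq N] (f : Finset N → ℝ)
    (hsub : ∀ S T : Finset N, S ⊆ T → ∀ e ∉ T,
      f (insert e T) - f T ≤ f (insert e S) - f S)
    (X : Finset N) : ∀ D : Finset N, Disjoint D X →
      f (X ∪ D) ≤ f X + ∑ u ∈ D, (f (insert u X) - f X) := by
  intro D
  induction D using Finset.induction_on with
  | empty => intro _; simp
  | @insert a s ha ih =>
    intro hD
    have haX : a ∉ X := by
      have := Finset.disjoint_left.mp hD (Finset.mem_insert_self a s)
      exact this
    have hsX : Disjoint s X := (Finset.disjoint_insert_left.mp hD).2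
    have haXs : a ∉ X ∪ s := by simp [haX, ha]
    have h1 := hsub X (X ∪ s) Finset.subset_union_left a haXs
    have h2 := ih hsX
    rw [Finset.union_insert, Finset.sum_insert ha]
    linarith

private lemma lemB {N : Type*} [DecidableEq N] (f : Finset N → ℝ)
    (hsub : ∀ S T : Finset N, S ⊆ T → ∀ e ∉ T,
      f (insert e T) - f T ≤ f (insert e S) - f S)
    (X Y : Finset N) (hXY : X ⊆ Y) : ∀ D : Finset N, D ⊆ Y \ X →
      ∑ u ∈ D, (f Y - f (Y.erase u)) ≤ f (X ∪ D) - f X := by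
  intro D
  induction D using Finset.induction_on with
  | empty => intro _; simp
  | @insert a s ha ih =>
    intro hD
    have haYX : a ∈ Y \ X := hD (Finset.mem_insert_self a s)
    have hsYX : s ⊆ Y \ X := fun x hx => hD (Finset.mem_insert_of_mem hx)
    have haY : a ∈ Y := (Finset.mem_sdiff.mp haYX).1
    have haX : a ∉ X := (Finset.mem_sdiff.mp haYX).2
    have hXsE : X ∪ s ⊆ Y.erase a := by
      apply Finset.union_subset
      · exact Finset.subset_erase.mpr ⟨hXY, haX⟩
      · exact Finset.subset_erase.mpr ⟨hsYX.trans Finset.sdiff_subset, ha⟩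
    have haE : a ∉ Y.erase a := Finset.notMem_erase a Y
    have h1 := hsub (X ∪ s) (Y.erase a) hXsE a haE
    rw [Finset.insert_erase haY] at h1
    have haXs : a ∉ X ∪ s := by simp [haX, ha]
    have h2 := ih hsYX
    rw [Finset.union_insert, Finset.sum_insert ha]
    linarith

theorem stmt_12 {N : Type*} [DecidableEq N] (f : Finset N → ℝ)
    (hsub : ∀ S T : Finset N, S ⊆ T → ∀ e ∉ T,
      f (insert e T) - f T ≤ f (insert e S) - f S)
    (X Y : Finset N) (hXY : X ⊆ Y)
    (W : Finset N) (hXW : X ⊆ W) (hWY : W ⊆ Y) :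
    f W - ∑ u ∈ Y \ X, ((f (insert u X) - f X) - (f Y - f (Y.erase u))) ≤
      f (X ∪ (Y \ X).filter fun u => 0 < f (insert u X) - f X) := by
  set m : N → ℝ := fun u => f (insert u X) - f X with hm
  set g : N → ℝ := fun u => f Y - f (Y.erase u) with hg
  set Z : Finset N := (Y \ X).filter fun u => 0 < f (insert u X) - f X with hZ
  -- upper bound on f W
  have hWdis : Disjoint (W \ X) X := Finset.sdiff_disjoint
  have hA : f W ≤ f X + ∑ u ∈ W \ X, m u := by
    have := lemA f hsub X (W \ X) hWdis
    rwa [Finset.union_sdiff_of_subset hXW] at this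
  -- lower bound on f (X ∪ Z)
  have hZsub : Z ⊆ Y \ X := Finset.filter_subset _ _
  have hB : ∑ u ∈ Z, g u ≤ f (X ∪ Z) - f X := lemB f hsub X Y hXY Z hZsub
  -- ∑_{W\X} m ≤ ∑_Z m
  have hWXsub : W \ X ⊆ Y \ X := Finset.sdiff_subset_sdiff hWY (le_refl X)
  have h1 : ∑ u ∈ W \ X, m u ≤ ∑ u ∈ Z, m u := by
    have hsplit := Finset.sum_filter_add_sum_filter_not (W \ X)
      (fun u => 0 < f (insert u X) - f X) m
    have hneg : ∑ u ∈ (W \ X).filter (fun u => ¬ 0 < f (insert u X) - f X), m u ≤ 0 := by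
      apply Finset.sum_nonpos
      intro u hu
      have := (Finset.mem_filter.mp hu).2
      simp only [hm]
      linarith [not_lt.mp this]
    have hfsub : (W \ X).filter (fun u => 0 < f (insert u X) - f X) ⊆ Z :=
      Finset.filter_subset_filter _ hWXsub
    have h2 : ∑ u ∈ (W \ X).filter (fun u => 0 < f (insert u X) - f X), m u ≤
        ∑ u ∈ Z, m u := by
      apply Finset.sum_le_sum_of_subset_of_nonneg hfsub
      intro u hu _
      have := (Finset.mem_filter.mp hu).2
      simp only [hm]
      linarith
    linarith
  -- term nonnegativity on Y \ X
  have hterm : ∀ u ∈ Y \ X, g u ≤ m u := by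
    intro u hu
    have huY : u ∈ Y := (Finset.mem_sdiff.mp hu).1
    have huX : u ∉ X := (Finset.mem_sdiff.mp hu).2
    have hXE : X ⊆ Y.erase u := Finset.subset_erase.mpr ⟨hXY, huX⟩
    have := hsub X (Y.erase u) hXE u (Finset.notMem_erase u Y)
    rw [Finset.insert_erase huY] at this
    simp only [hm, hg]
    linarith
  -- ∑_Z (m - g) ≤ ∑_{Y\X} (m - g)
  have h3 : ∑ u ∈ Z, (m u - g u) ≤ ∑ u ∈ Y \ X, (m u - g u) := by
    apply Finset.sum_le_sum_of_subset_of_nonneg hZsub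
    intro u hu _
    linarith [hterm u hu]
  have h4 : ∑ u ∈ Z, (m u - g u) = ∑ u ∈ Z, m u - ∑ u ∈ Z, g u :=
    Finset.sum_sub_distrib m g
  linarith
end

section
/- Let N be a finite set and let F: ℝ^N → ℝ be differentiable on the box [0,1]^N with an antitone gradient on the box (i.e., ∇F(x) ≥ ∇F(y) coordinatewise whenever x ≤ y coordinatewise, x, y ∈ [0,1]^N). Let x, x', y, y' ∈ [0,1]^N with x ≤ x' and y' ≤ y coordinatewise, let r ∈ [0,1]^N, and let γ ∈ ℝ. If Σ_{u∈N} [r_u·∂_u F(x') − (1−r_u)·∂_u F(y')] ≤ Σ_{u∈N} [r_u·∂_u F(x) − (1−r_u)·∂_u F(y)] − γ, then Σ_{u∈N} [∂_u F(x') − ∂_u F(y')] ≤ Σ_{u∈N} [∂_u F(x) − ∂_u F(y)] − γ. -/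
open Finset

theorem stmt_13 {N : Type*} [Fintype N] [DecidableEq N]
    (F : (N → ℝ) → ℝ) (F' : (N → ℝ) → ((N → ℝ) →L[ℝ] ℝ))
    (hdiff : ∀ x ∈ Set.Icc (0 : N → ℝ) 1, HasFDerivWithinAt F (F' x) (Set.Icc 0 1) x)
    (hanti : ∀ x ∈ Set.Icc (0 : N → ℝ) 1, ∀ y ∈ Set.Icc (0 : N → ℝ) 1, x ≤ y →
      ∀ u : N, F' y (Pi.single u 1) ≤ F' x (Pi.single u 1))
    (x x' y y' : N → ℝ)
    (hx : x ∈ Set.Icc (0 : N → ℝ) 1) (hx' : x' ∈ Set.Icc (0 : N → ℝ) 1)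
    (hy : y ∈ Set.Icc (0 : N → ℝ) 1) (hy' : y' ∈ Set.Icc (0 : N → ℝ) 1)
    (hxx' : x ≤ x') (hy'y : y' ≤ y)
    (r : N → ℝ) (hr : ∀ u, r u ∈ Set.Icc (0 : ℝ) 1) (γ : ℝ)
    (h : ∑ u : N, (r u * F' x' (Pi.single u 1) - (1 - r u) * F' y' (Pi.single u 1)) ≤
        ∑ u : N, (r u * F' x (Pi.single u 1) - (1 - r u) * F' y (Pi.single u 1)) - γ) :
    ∑ u : N, (F' x' (Pi.single u 1) - F' y' (Pi.single u 1)) ≤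
      ∑ u : N, (F' x (Pi.single u 1) - F' y (Pi.single u 1)) - γ := by
  have key : ∑ u : N, ((1 - r u) * F' x' (Pi.single u 1) - r u * F' y' (Pi.single u 1)) ≤
      ∑ u : N, ((1 - r u) * F' x (Pi.single u 1) - r u * F' y (Pi.single u 1)) := by
    apply Finset.sum_le_sum
    intro u _
    have hA := hanti x hx x' hx' hxx' u
    have hB := hanti y' hy' y hy hy'y u
    have h0 := (hr u).1
    have h1 := (hr u).2
    nlinarith
  have e1 : ∑ u : N, (F' x' (Pi.single u 1) - F' y' (Pi.single u 1)) =
      ∑ u : N, (r u * F' x' (Pi.single u 1) - (1 - r u) * F' y' (Pi.single u 1)) +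
      ∑ u : N, ((1 - r u) * F' x' (Pi.single u 1) - r u * F' y' (Pi.single u 1)) := by
    rw [← Finset.sum_add_distrib]
    exact Finset.sum_congr rfl fun u _ => by ring
  have e2 : ∑ u : N, (F' x (Pi.single u 1) - F' y (Pi.single u 1)) =
      ∑ u : N, (r u * F' x (Pi.single u 1) - (1 - r u) * F' y (Pi.single u 1)) +
      ∑ u : N, ((1 - r u) * F' x (Pi.single u 1) - r u * F' y (Pi.single u 1)) := by
    rw [← Finset.sum_add_distrib]
    exact Finset.sum_congr rfl fun u _ => by ring
  linarith
end

section
/- Let f be a submodular set function on a finite ground set N with multilinear extension F. Let OPT ⊆ N, let Δ ∈ [0,1], and let x, y ∈ [0,1]^N satisfy y = x + Δ·1_N. For each u ∈ N set a_u := F(x with u-coordinate set to 1) − F(x with u-coordinate set to 0) and b_u := −(F(y with u-coordinate set to 1) − F(y with u-coordinate set to 0)), and let r_u := a_u/(a_u+b_u) if a_u > 0 and b_u > 0, r_u := 1 if a_u > 0 and b_u ≤ 0, and r_u := 0 if a_u ≤ 0. Then for every δ ∈ [0, Δ], setting x' := x + δ·r and y' := y − δ·(1_N − r), it holds that F((1_OPT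 ∨ x) ∧ y) − F((1_OPT ∨ x') ∧ y') ≤ δ · Σ_{u : a_u > 0 and b_u > 0} max(b_u·r_u, a_u·(1 − r_u)). -/
open Finset

section Aux

variable {N : Type*} [Fintype N] [DecidableEq N]

/-- The partial derivative of the multilinear extension in coordinate `u`. -/
noncomputable def mderiv (f : Finset N → ℝ) (u : N) (w : N → ℝ) : ℝ :=
  multilinearExt f (Function.update w u 1) - multilinearExt f (Function.update w u 0)

lemma key1 (f : Finset N → ℝ) (u : N) (w : N → ℝ) :
    multilinearExt f w = ∑ T ∈ ((univ : Finset N).erase u).powerset,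
      (f T * (1 - w u) + f (insert u T) * w u) *
        ((∏ i ∈ T, w i) * ∏ i ∈ ((univ : Finset N).erase u) \ T, (1 - w i)) := by
  have h0 : multilinearExt f w = ∑ S ∈ (insert u ((univ : Finset N).erase u)).powerset,
      f S * ((∏ i ∈ S, w i) * ∏ i ∈ Sᶜ, (1 - w i)) := by
    rw [insert_erase (mem_univ u), powerset_univ]; rfl
  rw [h0, sum_powerset_insert (notMem_erase u univ), ← sum_add_distrib]
  refine sum_congr rfl fun T hT => ?_
  have hTsub : T ⊆ (univ : Finset N).erase u := mem_powerset.mp hT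
  have huT : u ∉ T := fun h => (notMem_erase u univ) (hTsub h)
  have hset : Tᶜ.erase u = ((univ : Finset N).erase u) \ T := by
    ext i
    simp only [mem_erase, mem_compl, mem_sdiff, mem_univ, and_true]
    try tauto
  have huc : u ∈ Tᶜ := mem_compl.mpr huT
  have hc1 : ∏ i ∈ Tᶜ, (1 - w i)
      = (1 - w u) * ∏ i ∈ ((univ : Finset N).erase u) \ T, (1 - w i) := by
    rw [← Finset.mul_prod_erase Tᶜ (fun i => 1 - w i) huc, hset]
  have hc2 : (insert u T)ᶜ = ((univ : Finset N).erase u) \ T := by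
    rw [compl_insert, hset]
  rw [hc1, prod_insert huT, hc2]
  ring

lemma key1u (f : Finset N → ℝ) (u : N) (w : N → ℝ) (s : ℝ) :
    multilinearExt f (Function.update w u s) = ∑ T ∈ ((univ : Finset N).erase u).powerset,
      (f T * (1 - s) + f (insert u T) * s) *
        ((∏ i ∈ T, w i) * ∏ i ∈ ((univ : Finset N).erase u) \ T, (1 - w i)) := by
  rw [key1 f u (Function.update w u s)]
  refine sum_congr rfl fun T hT => ?_
  have hTsub : T ⊆ (univ : Finset N).erase u := mem_powerset.mp hT
  have huT : u ∉ T := fun h => (notMem_erase u univ) (hTsub h)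
  have huD : u ∉ ((univ : Finset N).erase u) \ T :=
    fun h => (notMem_erase u univ) ((mem_sdiff.mp h).1)
  have p1 : ∏ i ∈ T, Function.update w u s i = ∏ i ∈ T, w i :=
    prod_congr rfl fun i hi => Function.update_of_ne (ne_of_mem_of_not_mem hi huT) _ _
  have p2 : ∏ i ∈ ((univ : Finset N).erase u) \ T, (1 - Function.update w u s i)
      = ∏ i ∈ ((univ : Finset N).erase u) \ T, (1 - w i) :=
    prod_congr rfl fun i hi => by rw [Function.update_of_ne (ne_of_mem_of_not_mem hi huD)]
  rw [Function.update_self, p1, p2]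

lemma mderiv_eq (f : Finset N → ℝ) (u : N) (w : N → ℝ) :
    mderiv f u w = ∑ T ∈ ((univ : Finset N).erase u).powerset,
      (f (insert u T) - f T) *
        ((∏ i ∈ T, w i) * ∏ i ∈ ((univ : Finset N).erase u) \ T, (1 - w i)) := by
  rw [mderiv, key1u f u w 1, key1u f u w 0, ← sum_sub_distrib]
  exact sum_congr rfl fun T _ => by ring

lemma mlin_update_sub (f : Finset N → ℝ) (u : N) (w : N → ℝ) (s t : ℝ) :
    multilinearExt f (Function.update w u s) - multilinearExt f (Function.update w u t)
      = (s - t) * mderiv f u w := by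
  rw [key1u f u w s, key1u f u w t, mderiv_eq, ← sum_sub_distrib, mul_sum]
  exact sum_congr rfl fun T _ => by ring

lemma one_sub_update (z : N → ℝ) (v : N) (c : ℝ) (i : N) :
    1 - Function.update z v c i = Function.update (fun j => 1 - z j) v (1 - c) i := by
  by_cases h : i = v
  · subst h; simp
  · rw [Function.update_of_ne h, Function.update_of_ne h]

lemma mderiv_affine (f : Finset N → ℝ) (u v : N) (hvu : v ≠ u) (z : N → ℝ) (c : ℝ) :
    mderiv f u (Function.update z v c) = mderiv f u (Function.update z v 0)
      + c * (mderiv f u (Function.update z v 1) - mderiv f u (Function.update z v 0)) := by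
  rw [mderiv_eq f u (Function.update z v c), mderiv_eq f u (Function.update z v 0),
    mderiv_eq f u (Function.update z v 1), ← sum_sub_distrib, mul_sum, ← sum_add_distrib]
  refine sum_congr rfl fun T hT => ?_
  have hTsub : T ⊆ (univ : Finset N).erase u := mem_powerset.mp hT
  have hvW : v ∈ (univ : Finset N).erase u := mem_erase.mpr ⟨hvu, mem_univ v⟩
  by_cases hvT : v ∈ T
  · have hvs : v ∉ ((univ : Finset N).erase u) \ T := fun h => (mem_sdiff.mp h).2 hvT
    have h1 : ∀ e : ℝ, ∏ i ∈ T, Function.update z v e i = e * ∏ i ∈ T \ {v}, z i :=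
      fun e => prod_update_of_mem hvT z e
    have h2 : ∀ e : ℝ, ∏ i ∈ ((univ : Finset N).erase u) \ T, (1 - Function.update z v e i)
        = ∏ i ∈ ((univ : Finset N).erase u) \ T, (1 - z i) :=
      fun e => prod_congr rfl fun i hi => by
        rw [Function.update_of_ne (ne_of_mem_of_not_mem hi hvs)]
    simp only [h1, h2]; ring
  · have hvs : v ∈ ((univ : Finset N).erase u) \ T := mem_sdiff.mpr ⟨hvW, hvT⟩
    have h1 : ∀ e : ℝ, ∏ i ∈ T, Function.update z v e i = ∏ i ∈ T, z i :=
      fun e => prod_congr rfl fun i hi =>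
        Function.update_of_ne (ne_of_mem_of_not_mem hi hvT) _ _
    have h2 : ∀ e : ℝ, ∏ i ∈ ((univ : Finset N).erase u) \ T, (1 - Function.update z v e i)
        = (1 - e) * ∏ i ∈ (((univ : Finset N).erase u) \ T) \ {v}, (1 - z i) := fun e => by
      simp only [one_sub_update z v e]
      exact prod_update_of_mem hvs (fun j => 1 - z j) (1 - e)
    simp only [h1, h2]; ring

lemma mderiv_second (f : Finset N → ℝ)
    (hsub : ∀ S T : Finset N, S ⊆ T → ∀ e ∉ T,
      f (insert e T) - f T ≤ f (insert e S) - f S)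
    (u v : N) (hvu : v ≠ u) (z : N → ℝ) (hz : ∀ i, 0 ≤ z i ∧ z i ≤ 1) :
    mderiv f u (Function.update z v 1) ≤ mderiv f u (Function.update z v 0) := by
  have hvW : v ∈ (univ : Finset N).erase u := mem_erase.mpr ⟨hvu, mem_univ v⟩
  have hvW' : v ∉ ((univ : Finset N).erase u).erase v := notMem_erase v _
  rw [mderiv_eq, mderiv_eq,
    show (univ : Finset N).erase u = insert v (((univ : Finset N).erase u).erase v) from
      (insert_erase hvW).symm,
    sum_powerset_insert hvW', sum_powerset_insert hvW', ← sum_add_distrib, ← sum_add_distrib]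
  set W := ((univ : Finset N).erase u).erase v with hWdef
  refine sum_le_sum fun T hT => ?_
  have hTW : T ⊆ W := mem_powerset.mp hT
  have hvT : v ∉ T := fun h => hvW' (hTW h)
  have huT : u ∉ T := fun h => (notMem_erase u univ) ((erase_subset _ _) (hTW h))
  have huvT : u ∉ insert v T := by
    simp only [mem_insert]; rintro (rfl | h); exacts [hvu rfl, huT h]
  have hvWW : v ∉ W := hvW'
  have hsd1 : insert v W \ insert v T = W \ T := by
    ext i; simp only [mem_sdiff, mem_insert]
    constructor
    · rintro ⟨rfl | h1, h2⟩
      · exact absurd (Or.inl rfl) h2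
      · exact ⟨h1, fun h => h2 (Or.inr h)⟩
    · rintro ⟨h1, h2⟩
      refine ⟨Or.inr h1, ?_⟩
      rintro (rfl | h); exacts [hvWW h1, h2 h]
  have hsd2 : insert v W \ T = insert v (W \ T) := by
    ext i; simp only [mem_sdiff, mem_insert]
    constructor
    · rintro ⟨rfl | h1, h2⟩
      · exact Or.inl rfl
      · exact Or.inr ⟨h1, h2⟩
    · rintro (rfl | ⟨h1, h2⟩)
      exacts [⟨Or.inl rfl, hvT⟩, ⟨Or.inr h1, h2⟩]
  have hvWT : v ∉ W \ T := fun h => hvWW (mem_sdiff.mp h).1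
  have pT : ∀ e : ℝ, ∏ i ∈ T, Function.update z v e i = ∏ i ∈ T, z i :=
    fun e => prod_congr rfl fun i hi =>
      Function.update_of_ne (ne_of_mem_of_not_mem hi hvT) _ _
  have pWT : ∀ e : ℝ, ∏ i ∈ W \ T, (1 - Function.update z v e i)
      = ∏ i ∈ W \ T, (1 - z i) :=
    fun e => prod_congr rfl fun i hi => by
      rw [Function.update_of_ne (ne_of_mem_of_not_mem hi hvWT)]
  have e1 : ∏ i ∈ insert v W \ T, (1 - Function.update z v 1 i) = 0 := by
    refine prod_eq_zero (mem_sdiff.mpr ⟨mem_insert_self v W, hvT⟩) ?_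
    rw [Function.update_self]; ring
  have e2 : ∏ i ∈ insert v T, Function.update z v 1 i = ∏ i ∈ T, z i := by
    rw [prod_insert hvT, Function.update_self, one_mul, pT]
  have e3 : ∏ i ∈ insert v W \ insert v T, (1 - Function.update z v 1 i)
      = ∏ i ∈ W \ T, (1 - z i) := by rw [hsd1, pWT]
  have e4 : ∏ i ∈ insert v W \ T, (1 - Function.update z v 0 i)
      = ∏ i ∈ W \ T, (1 - z i) := by
    rw [hsd2, prod_insert hvWT, Function.update_self, pWT]; ring
  have e5 : ∏ i ∈ insert v T, Function.update z v 0 i = 0 := by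
    refine prod_eq_zero (mem_insert_self v T) ?_
    rw [Function.update_self]
  rw [e1, e2, e3, e4, e5, pT 0, hsd1, pWT 0]
  have hPQ : 0 ≤ (∏ i ∈ T, z i) * ∏ i ∈ W \ T, (1 - z i) :=
    mul_nonneg (prod_nonneg fun i _ => (hz i).1)
      (prod_nonneg fun i _ => by linarith [(hz i).2])
  have hf := hsub T (insert v T) (subset_insert v T) u huvT
  nlinarith [mul_le_mul_of_nonneg_right hf hPQ]

lemma mderiv_update_le (f : Finset N → ℝ)
    (hsub : ∀ S T : Finset N, S ⊆ T → ∀ e ∉ T,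
      f (insert e T) - f T ≤ f (insert e S) - f S)
    (u v : N) (hvu : v ≠ u) (z : N → ℝ) (hz : ∀ i, 0 ≤ z i ∧ z i ≤ 1)
    (s t : ℝ) (hst : s ≤ t) :
    mderiv f u (Function.update z v t) ≤ mderiv f u (Function.update z v s) := by
  rw [mderiv_affine f u v hvu z t, mderiv_affine f u v hvu z s]
  have h := mderiv_second f hsub u v hvu z hz
  nlinarith

lemma mderiv_update_self (f : Finset N → ℝ) (u : N) (z : N → ℝ) (c : ℝ) :
    mderiv f u (Function.update z u c) = mderiv f u z := by
  rw [mderiv, mderiv, Function.update_idem, Function.update_idem]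

lemma mderiv_mono (f : Finset N → ℝ)
    (hsub : ∀ S T : Finset N, S ⊆ T → ∀ e ∉ T,
      f (insert e T) - f T ≤ f (insert e S) - f S)
    (u : N) (p q : N → ℝ) (hp : ∀ i, 0 ≤ p i ∧ p i ≤ 1) (hq : ∀ i, 0 ≤ q i ∧ q i ≤ 1)
    (hpq : ∀ i, p i ≤ q i) : mderiv f u q ≤ mderiv f u p := by
  classical
  have H : ∀ T : Finset N, mderiv f u (fun i => if i ∈ T then q i else p i) ≤ mderiv f u p := by
    intro T
    induction T using Finset.induction_on with
    | empty => simp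
    | @insert w T hw IH =>
      set m : N → ℝ := fun i => if i ∈ T then q i else p i with hmdef
      have hmix : (fun i => if i ∈ insert w T then q i else p i)
          = Function.update m w (q w) := by
        funext i
        by_cases h : i = w
        · subst h; simp [hmdef]
        · simp [hmdef, Function.update_of_ne h, mem_insert, h]
      rw [hmix]
      have hm01 : ∀ i, 0 ≤ m i ∧ m i ≤ 1 := by
        intro i; rw [hmdef]; dsimp only; split_ifs; exacts [hq i, hp i]
      by_cases hwu : w = u
      · subst hwu; rw [mderiv_update_self]; exact IH
      · have h1 : mderiv f u (Function.update m w (q w))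
            ≤ mderiv f u (Function.update m w (p w)) :=
          mderiv_update_le f hsub u w hwu m hm01 (p w) (q w) (hpq w)
        have h2 : Function.update m w (p w) = m := by
          have h3 : p w = m w := by rw [hmdef]; dsimp only; rw [if_neg hw]
          rw [h3]; exact Function.update_eq_self w m
        rw [h2] at h1
        exact le_trans h1 IH
  have h := H univ
  have he : (fun i => if i ∈ (univ : Finset N) then q i else p i) = q := by
    funext i; simp
  rwa [he] at h

end Aux

theorem stmt_14 {N : Type*} [Fintype N] [DecidableEq N] (f : Finset N → ℝ)
    (hsub : ∀ S T : Finset N, S ⊆ T → ∀ e ∉ T,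
      f (insert e T) - f T ≤ f (insert e S) - f S)
    (OPT : Finset N) (Δ : ℝ) (hΔ : Δ ∈ Set.Icc (0 : ℝ) 1)
    (x y : N → ℝ) (hx : x ∈ Set.Icc (0 : N → ℝ) 1) (hy : y ∈ Set.Icc (0 : N → ℝ) 1)
    (hxy : ∀ u, y u = x u + Δ)
    (a b r : N → ℝ)
    (ha : ∀ u, a u = multilinearExt f (Function.update x u 1)
      - multilinearExt f (Function.update x u 0))
    (hb : ∀ u, b u = -(multilinearExt f (Function.update y u 1)
      - multilinearExt f (Function.update y u 0)))
    (hr : ∀ u, r u = if 0 < a u ∧ 0 < b u then a u / (a u + b u)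
      else if 0 < a u then 1 else 0)
    (δ : ℝ) (hδ : δ ∈ Set.Icc 0 Δ) :
    multilinearExt f (((fun u => if u ∈ OPT then (1 : ℝ) else 0) ⊔ x) ⊓ y) -
        multilinearExt f
          (((fun u => if u ∈ OPT then (1 : ℝ) else 0) ⊔ (x + δ • r)) ⊓ (y - δ • (1 - r))) ≤
      δ * ∑ u ∈ univ.filter (fun u => 0 < a u ∧ 0 < b u),
        max (b u * r u) (a u * (1 - r u)) := by
  classical
  obtain ⟨hΔ0, hΔ1⟩ := hΔ
  obtain ⟨hδ0, hδΔ⟩ := hδ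
  have hx0 : ∀ u, (0 : ℝ) ≤ x u := fun u => hx.1 u
  have hx1 : ∀ u, x u ≤ 1 := fun u => hx.2 u
  have hy0 : ∀ u, (0 : ℝ) ≤ y u := fun u => hy.1 u
  have hy1 : ∀ u, y u ≤ 1 := fun u => hy.2 u
  have hxley : ∀ u, x u ≤ y u := fun u => by rw [hxy u]; linarith
  have hr0 : ∀ u, 0 ≤ r u := by
    intro u; rw [hr u]; split_ifs with h h2
    · exact div_nonneg h.1.le (by linarith [h.1, h.2])
    · norm_num
    · norm_num
  have hr1 : ∀ u, r u ≤ 1 := by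
    intro u; rw [hr u]; split_ifs with h h2
    · rw [div_le_one (by linarith [h.1, h.2])]; linarith [h.2]
    · norm_num
    · norm_num
  have hx01 : ∀ u, 0 ≤ x u ∧ x u ≤ 1 := fun u => ⟨hx0 u, hx1 u⟩
  have hy01 : ∀ u, 0 ≤ y u ∧ y u ≤ 1 := fun u => ⟨hy0 u, hy1 u⟩
  set z0 : N → ℝ := fun u => if u ∈ OPT then y u else x u with hz0def
  set z1 : N → ℝ := fun u => if u ∈ OPT then y u - δ * (1 - r u) else x u + δ * r u with hz1def
  have hδr : ∀ u, δ * r u ≤ δ := fun u => mul_le_of_le_one_right hδ0 (hr1 u)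
  have hδr0 : ∀ u, 0 ≤ δ * r u := fun u => mul_nonneg hδ0 (hr0 u)
  have hδr' : ∀ u, δ * (1 - r u) ≤ δ := fun u =>
    mul_le_of_le_one_right hδ0 (by linarith [hr0 u])
  have hδr0' : ∀ u, 0 ≤ δ * (1 - r u) := fun u => mul_nonneg hδ0 (by linarith [hr1 u])
  have hz0x : ∀ u, x u ≤ z0 u := by
    intro u; rw [hz0def]; dsimp only; split_ifs
    · exact hxley u
    · exact le_refl _
  have hz0y : ∀ u, z0 u ≤ y u := by
    intro u; rw [hz0def]; dsimp only; split_ifs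
    · exact le_refl _
    · exact hxley u
  have hz1x : ∀ u, x u ≤ z1 u := by
    intro u; rw [hz1def]; dsimp only; split_ifs
    · have := hδr' u; rw [hxy u]; linarith
    · linarith [hδr0 u]
  have hz1y : ∀ u, z1 u ≤ y u := by
    intro u; rw [hz1def]; dsimp only; split_ifs
    · linarith [hδr0' u]
    · have := hδr u; rw [hxy u]; linarith
  have e0 : ((fun u => if u ∈ OPT then (1 : ℝ) else 0) ⊔ x) ⊓ y = z0 := by
    funext u
    simp only [Pi.inf_apply, Pi.sup_apply, hz0def]
    by_cases h : u ∈ OPT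
    · rw [if_pos h, if_pos h, sup_eq_left.mpr (hx1 u), inf_eq_right.mpr (hy1 u)]
    · rw [if_neg h, if_neg h, sup_eq_right.mpr (hx0 u), inf_eq_left.mpr (hxley u)]
  have e1 : ((fun u => if u ∈ OPT then (1 : ℝ) else 0) ⊔ (x + δ • r)) ⊓ (y - δ • (1 - r))
      = z1 := by
    funext u
    simp only [Pi.inf_apply, Pi.sup_apply, Pi.add_apply, Pi.sub_apply, Pi.smul_apply,
      Pi.one_apply, smul_eq_mul, hz1def]
    by_cases h : u ∈ OPT
    · have h1 : x u + δ * r u ≤ 1 := by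
        have := hδr u; have := hy1 u; have := hxy u; linarith
      have h2 : y u - δ * (1 - r u) ≤ 1 := by linarith [hδr0' u, hy1 u]
      rw [if_pos h, if_pos h, sup_eq_left.mpr h1, inf_eq_right.mpr h2]
    · have h1 : (0 : ℝ) ≤ x u + δ * r u := by linarith [hx0 u, hδr0 u]
      have h2 : x u + δ * r u ≤ y u - δ * (1 - r u) := by
        have hh : δ * r u + δ * (1 - r u) = δ := by ring
        have := hxy u; linarith
      rw [if_neg h, if_neg h, sup_eq_right.mpr h1, inf_eq_left.mpr h2]
  rw [e0, e1]
  -- the key pointwise bound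
  have hbound : ∀ w : N, ∀ D : ℝ, -b w ≤ D → D ≤ a w →
      (z0 w - z1 w) * D ≤ δ * (if 0 < a w ∧ 0 < b w
        then max (b w * r w) (a w * (1 - r w)) else 0) := by
    intro w D hbD hDa
    have hr0w := hr0 w
    have hr1w := hr1 w
    by_cases hw : w ∈ OPT
    · have hzz : z0 w - z1 w = δ * (1 - r w) := by
        rw [hz0def, hz1def]; dsimp only; rw [if_pos hw, if_pos hw]; ring
      rw [hzz]
      have h1 : δ * (1 - r w) * D ≤ δ * (1 - r w) * a w :=
        mul_le_mul_of_nonneg_left hDa (hδr0' w)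
      split_ifs with hP
      · have h2 : a w * (1 - r w) ≤ max (b w * r w) (a w * (1 - r w)) := le_max_right _ _
        have h3 : δ * (a w * (1 - r w)) ≤ δ * max (b w * r w) (a w * (1 - r w)) :=
          mul_le_mul_of_nonneg_left h2 hδ0
        nlinarith
      · rw [mul_zero]
        by_cases haw : 0 < a w
        · have hrw : r w = 1 := by rw [hr w, if_neg hP, if_pos haw]
          have h4 : δ * (1 - r w) * D = 0 := by rw [hrw]; ring
          linarith
        · have hrw : r w = 0 := by rw [hr w, if_neg hP, if_neg haw]
          have haw' : a w ≤ 0 := not_lt.mp haw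
          have h4 : δ * (1 - r w) * a w ≤ 0 := by rw [hrw]; nlinarith
          linarith
    · have hzz : z0 w - z1 w = -(δ * r w) := by
        rw [hz0def, hz1def]; dsimp only; rw [if_neg hw, if_neg hw]; ring
      rw [hzz]
      have hD' : -D ≤ b w := by linarith
      have h1 : δ * r w * (-D) ≤ δ * r w * b w :=
        mul_le_mul_of_nonneg_left hD' (hδr0 w)
      have heq : -(δ * r w) * D = δ * r w * (-D) := by ring
      rw [heq]
      split_ifs with hP
      · have h2 : b w * r w ≤ max (b w * r w) (a w * (1 - r w)) := le_max_left _ _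
        have h3 : δ * (b w * r w) ≤ δ * max (b w * r w) (a w * (1 - r w)) :=
          mul_le_mul_of_nonneg_left h2 hδ0
        nlinarith
      · rw [mul_zero]
        by_cases haw : 0 < a w
        · have hrw : r w = 1 := by rw [hr w, if_neg hP, if_pos haw]
          have hbw : b w ≤ 0 := by
            by_contra hc
            exact hP ⟨haw, lt_of_not_ge fun h => hc (by linarith)⟩
          have h4 : δ * r w * b w ≤ 0 := by rw [hrw]; nlinarith
          linarith
        · have hrw : r w = 0 := by rw [hr w, if_neg hP, if_neg haw]
          have h4 : δ * r w * b w = 0 := by rw [hrw]; ring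
          linarith
  -- telescoping induction
  have main : ∀ T : Finset N,
      multilinearExt f z0 - multilinearExt f (fun i => if i ∈ T then z1 i else z0 i)
        ≤ δ * ∑ u ∈ T.filter (fun u => 0 < a u ∧ 0 < b u),
            max (b u * r u) (a u * (1 - r u)) := by
    intro T
    induction T using Finset.induction_on with
    | empty => simp
    | @insert w T hw IH =>
      set m : N → ℝ := fun i => if i ∈ T then z1 i else z0 i with hmdef
      have hmw : (fun i => if i ∈ insert w T then z1 i else z0 i)
          = Function.update m w (z1 w) := by
        funext i
        by_cases h : i = w
        · subst h; simp [hmdef]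
        · simp [hmdef, Function.update_of_ne h, mem_insert, h]
      rw [hmw]
      have hmx : ∀ i, x i ≤ m i := by
        intro i; rw [hmdef]; dsimp only; split_ifs
        exacts [hz1x i, hz0x i]
      have hmy : ∀ i, m i ≤ y i := by
        intro i; rw [hmdef]; dsimp only; split_ifs
        exacts [hz1y i, hz0y i]
      have hm01 : ∀ i, 0 ≤ m i ∧ m i ≤ 1 :=
        fun i => ⟨le_trans (hx0 i) (hmx i), le_trans (hmy i) (hy1 i)⟩
      have hDa : mderiv f w m ≤ a w := by
        rw [ha w]; exact mderiv_mono f hsub w x m hx01 hm01 hmx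
      have hbD : -b w ≤ mderiv f w m := by
        rw [hb w, neg_neg]; exact mderiv_mono f hsub w m y hm01 hy01 hmy
      have h0' : Function.update m w (z0 w) = m := by
        have hh : z0 w = m w := by rw [hmdef]; dsimp only; rw [if_neg hw]
        rw [hh]; exact Function.update_eq_self w m
      have step : multilinearExt f m - multilinearExt f (Function.update m w (z1 w))
          = (z0 w - z1 w) * mderiv f w m := by
        calc multilinearExt f m - multilinearExt f (Function.update m w (z1 w))
            = multilinearExt f (Function.update m w (z0 w))
              - multilinearExt f (Function.update m w (z1 w)) := by rw [h0']
          _ = (z0 w - z1 w) * mderiv f w m := mlin_update_sub f w m (z0 w) (z1 w)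
      have hKey := hbound w (mderiv f w m) hbD hDa
      rw [filter_insert]
      have hsplit : multilinearExt f z0 - multilinearExt f (Function.update m w (z1 w))
          = (multilinearExt f z0 - multilinearExt f m)
            + ((z0 w - z1 w) * mderiv f w m) := by rw [← step]; ring
      rw [hsplit]
      by_cases hP : 0 < a w ∧ 0 < b w
      · rw [if_pos hP, sum_insert (fun hc => hw (mem_filter.mp hc).1), mul_add]
        rw [if_pos hP] at hKey
        linarith
      · rw [if_neg hP]
        rw [if_neg hP, mul_zero] at hKey
        linarith
  have hfinal := main univ
  have he : (fun i => if i ∈ (univ : Finset N) then z1 i else z0 i) = z1 := by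
    funext i; simp
  rwa [he] at hfinal
end

section
/- Let N be a finite set and let F: ℝ^N → ℝ be differentiable on the box [0,1]^N with an antitone gradient on the box (i.e., ∇F(x) ≥ ∇F(y) coordinatewise whenever x ≤ y coordinatewise, x, y ∈ [0,1]^N). Let z* ∈ [0,1]^N, let Δ ∈ [0,1], and let x, y ∈ [0,1]^N satisfy y = x + Δ·1_N. For each u ∈ N set a_u := ∂_u F(x) and b_u := −∂_u F(y), and let r_u := a_u/(a_u+b_u) if a_u > 0 and b_u > 0, r_u := 1 if a_u > 0 and b_u ≤ 0, and r_u := 0 if a_u ≤ 0. Then for every δ ∈ [0, Δ], setting x' := x + δ·r and y' := y − δ·(1_N − r), it holds that F((z* ∨ x) ∧ y) − F((z* ∨ x') ∧ y') ≤ δ · Σ_{u : a_u > 0 and b_u > 0} max(b_u·r_u, a_u·(1 − r_u)). -/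
open Finset

lemma apply_eq_sum_aux {N : Type*} [Fintype N] [DecidableEq N]
    (L : (N → ℝ) →L[ℝ] ℝ) (h : N → ℝ) :
    L h = ∑ u, h u * L (Pi.single u 1) := by
  conv_lhs => rw [pi_eq_sum_univ h, map_sum]
  refine Finset.sum_congr rfl fun u _ => ?_
  have hfun : (fun j => if u = j then (1:ℝ) else 0) = Pi.single u 1 := by
    ext j; simp [Pi.single_apply, eq_comm]
  rw [hfun, map_smul, smul_eq_mul]

lemma grad_bound_aux {N : Type*} [Fintype N] [DecidableEq N]
    (F : (N → ℝ) → ℝ) (F' : (N → ℝ) → ((N → ℝ) →L[ℝ] ℝ))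
    (hdiff : ∀ x ∈ Set.Icc (0 : N → ℝ) 1, HasFDerivWithinAt F (F' x) (Set.Icc 0 1) x)
    (hanti : ∀ x ∈ Set.Icc (0 : N → ℝ) 1, ∀ y ∈ Set.Icc (0 : N → ℝ) 1, x ≤ y →
      ∀ u : N, F' y (Pi.single u 1) ≤ F' x (Pi.single u 1))
    (v w : N → ℝ) (hv : v ∈ Set.Icc (0 : N → ℝ) 1) (hw : w ∈ Set.Icc (0 : N → ℝ) 1)
    (hvw : v ≤ w) :
    F' w (w - v) ≤ F w - F v ∧ F w - F v ≤ F' v (w - v) := by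
  set γ : ℝ → (N → ℝ) := fun t => v + t • (w - v) with hγ
  have hγ0 : γ 0 = v := by simp [hγ]
  have hγ1 : γ 1 = w := by simp [hγ]
  have hle1 : ∀ t ∈ Set.Icc (0:ℝ) 1, v ≤ γ t := by
    intro t ht u
    simp only [hγ, Pi.add_apply, Pi.smul_apply, Pi.sub_apply, smul_eq_mul]
    nlinarith [hvw u, ht.1]
  have hle2 : ∀ t ∈ Set.Icc (0:ℝ) 1, γ t ≤ w := by
    intro t ht u
    simp only [hγ, Pi.add_apply, Pi.smul_apply, Pi.sub_apply, smul_eq_mul]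
    nlinarith [hvw u, ht.1, ht.2]
  have hmem : ∀ t ∈ Set.Icc (0:ℝ) 1, γ t ∈ Set.Icc (0:N→ℝ) 1 := by
    intro t ht
    exact ⟨le_trans hv.1 (hle1 t ht), le_trans (hle2 t ht) hw.2⟩
  have hderiv : ∀ t ∈ Set.Icc (0:ℝ) 1,
      HasDerivWithinAt (fun s => F (γ s)) (F' (γ t) (w - v)) (Set.Icc 0 1) t := by
    intro t ht
    have h1 : HasDerivWithinAt γ (w - v) (Set.Icc (0:ℝ) 1) t := by
      have := (((hasDerivAt_id t).smul_const (w - v)).const_add v).hasDerivWithinAt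
        (s := Set.Icc (0:ℝ) 1)
      simpa [hγ] using this
    exact (hdiff (γ t) (hmem t ht)).comp_hasDerivWithinAt t h1 hmem
  have hcont : ContinuousOn (fun s => F (γ s)) (Set.Icc (0:ℝ) 1) :=
    fun t ht => (hderiv t ht).continuousWithinAt
  have hboundU : ∀ t ∈ Set.Icc (0:ℝ) 1, F' (γ t) (w - v) ≤ F' v (w - v) := by
    intro t ht
    rw [apply_eq_sum_aux, apply_eq_sum_aux]
    refine Finset.sum_le_sum fun u _ => ?_
    have hnn : 0 ≤ (w - v) u := sub_nonneg.2 (hvw u)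
    exact mul_le_mul_of_nonneg_left (hanti v hv (γ t) (hmem t ht) (hle1 t ht) u) hnn
  have hboundL : ∀ t ∈ Set.Icc (0:ℝ) 1, F' w (w - v) ≤ F' (γ t) (w - v) := by
    intro t ht
    rw [apply_eq_sum_aux, apply_eq_sum_aux]
    refine Finset.sum_le_sum fun u _ => ?_
    have hnn : 0 ≤ (w - v) u := sub_nonneg.2 (hvw u)
    exact mul_le_mul_of_nonneg_left (hanti (γ t) (hmem t ht) w hw (hle2 t ht) u) hnn
  constructor
  · -- lower bound : F' w (w-v) ≤ F w - F v
    set c : ℝ := F' w (w - v) with hc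
    have hmono : MonotoneOn (fun t => F (γ t) - c * t) (Set.Icc (0:ℝ) 1) := by
      refine monotoneOn_of_hasDerivWithinAt_nonneg (convex_Icc 0 1)
        (hcont.sub ((continuous_const.mul continuous_id).continuousOn))
        (f' := fun t => F' (γ t) (w - v) - c) (fun t ht => ?_) (fun t ht => ?_)
      · have h1 := (hderiv t (interior_subset ht)).mono interior_subset
        have h2 : HasDerivWithinAt (fun t : ℝ => c * t) c (interior (Set.Icc (0:ℝ) 1)) t := by
          simpa using (((hasDerivAt_id t).const_mul c).hasDerivWithinAt
            (s := interior (Set.Icc (0:ℝ) 1)))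
        exact h1.sub h2
      · exact sub_nonneg.2 (hboundL t (interior_subset ht))
    have := hmono (Set.mem_Icc.2 ⟨le_refl 0, zero_le_one⟩)
      (Set.mem_Icc.2 ⟨zero_le_one, le_refl 1⟩) zero_le_one
    simp only [hγ0, hγ1, mul_zero, mul_one, sub_zero] at this
    linarith
  · -- upper bound : F w - F v ≤ F' v (w-v)
    set c : ℝ := F' v (w - v) with hc
    have hmono : MonotoneOn (fun t => c * t - F (γ t)) (Set.Icc (0:ℝ) 1) := by
      refine monotoneOn_of_hasDerivWithinAt_nonneg (convex_Icc 0 1)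
        (((continuous_const.mul continuous_id).continuousOn).sub hcont)
        (f' := fun t => c - F' (γ t) (w - v)) (fun t ht => ?_) (fun t ht => ?_)
      · have h1 := (hderiv t (interior_subset ht)).mono interior_subset
        have h2 : HasDerivWithinAt (fun t : ℝ => c * t) c (interior (Set.Icc (0:ℝ) 1)) t := by
          simpa using (((hasDerivAt_id t).const_mul c).hasDerivWithinAt
            (s := interior (Set.Icc (0:ℝ) 1)))
        exact h2.sub h1
      · exact sub_nonneg.2 (hboundU t (interior_subset ht))
    have := hmono (Set.mem_Icc.2 ⟨le_refl 0, zero_le_one⟩)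
      (Set.mem_Icc.2 ⟨zero_le_one, le_refl 1⟩) zero_le_one
    simp only [hγ0, hγ1, mul_zero, mul_one, sub_zero] at this
    linarith

lemma clamp_ineqA (z xu yu c d : ℝ) (hc : 0 ≤ c) (hd : 0 ≤ d) :
    (z ⊔ (xu + c)) ⊓ (yu - d) ≤ (z ⊔ xu) ⊓ yu + c := by
  simp only [min_def, max_def]
  split_ifs <;> linarith

lemma clamp_ineqB (z xu yu c d : ℝ) (hc : 0 ≤ c) (hd : 0 ≤ d) :
    (z ⊔ xu) ⊓ yu ≤ (z ⊔ (xu + c)) ⊓ (yu - d) + d := by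
  simp only [min_def, max_def]
  split_ifs <;> linarith

theorem stmt_15 {N : Type*} [Fintype N] [DecidableEq N]
    (F : (N → ℝ) → ℝ) (F' : (N → ℝ) → ((N → ℝ) →L[ℝ] ℝ))
    (hdiff : ∀ x ∈ Set.Icc (0 : N → ℝ) 1, HasFDerivWithinAt F (F' x) (Set.Icc 0 1) x)
    (hanti : ∀ x ∈ Set.Icc (0 : N → ℝ) 1, ∀ y ∈ Set.Icc (0 : N → ℝ) 1, x ≤ y →
      ∀ u : N, F' y (Pi.single u 1) ≤ F' x (Pi.single u 1))
    (zstar : N → ℝ) (hzstar : zstar ∈ Set.Icc (0 : N → ℝ) 1)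
    (Δ : ℝ) (hΔ : Δ ∈ Set.Icc (0 : ℝ) 1)
    (x y : N → ℝ) (hx : x ∈ Set.Icc (0 : N → ℝ) 1) (hy : y ∈ Set.Icc (0 : N → ℝ) 1)
    (hxy : ∀ u, y u = x u + Δ)
    (a b r : N → ℝ)
    (ha : ∀ u, a u = F' x (Pi.single u 1))
    (hb : ∀ u, b u = -(F' y (Pi.single u 1)))
    (hr : ∀ u, r u = if 0 < a u ∧ 0 < b u then a u / (a u + b u)
      else if 0 < a u then 1 else 0)
    (δ : ℝ) (hδ : δ ∈ Set.Icc 0 Δ) :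
    F ((zstar ⊔ x) ⊓ y) - F ((zstar ⊔ (x + δ • r)) ⊓ (y - δ • (1 - r))) ≤
      δ * ∑ u ∈ univ.filter (fun u => 0 < a u ∧ 0 < b u),
        max (b u * r u) (a u * (1 - r u)) := by
  obtain ⟨hδ0, hδΔ⟩ := hδ
  obtain ⟨hΔ0, hΔ1⟩ := hΔ
  have hr0 : ∀ u, 0 ≤ r u := by
    intro u; rw [hr u]; split_ifs with h1 h2
    · exact div_nonneg h1.1.le (by linarith [h1.1, h1.2])
    · norm_num
    · exact le_refl 0
  have hr1 : ∀ u, r u ≤ 1 := by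
    intro u; rw [hr u]; split_ifs with h1 h2
    · rw [div_le_one (by linarith [h1.1, h1.2])]; linarith [h1.2]
    · exact le_refl 1
    · norm_num
  have hcnn : ∀ u, 0 ≤ δ * r u := fun u => mul_nonneg hδ0 (hr0 u)
  have hdnn : ∀ u, 0 ≤ δ * (1 - r u) := fun u => mul_nonneg hδ0 (by linarith [hr1 u])
  have hx0 : ∀ u, (0:ℝ) ≤ x u := fun u => hx.1 u
  have hy1 : ∀ u, y u ≤ 1 := fun u => hy.2 u
  set x' := x + δ • r with hx'def
  set y' := y - δ • (1 - r) with hy'def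
  set q := (zstar ⊔ x) ⊓ y with hqdef
  set q' := (zstar ⊔ x') ⊓ y' with hq'def
  set m := q ⊓ q' with hmdef
  have hx'u : ∀ u, x' u = x u + δ * r u := fun u => rfl
  have hy'u : ∀ u, y' u = y u - δ * (1 - r u) := fun u => rfl
  have hqu : ∀ u, q u = (zstar u ⊔ x u) ⊓ y u := fun u => rfl
  have hq'u : ∀ u, q' u = (zstar u ⊔ (x u + δ * r u)) ⊓ (y u - δ * (1 - r u)) := fun u => rfl
  have hmu : ∀ u, m u = q u ⊓ q' u := fun u => rfl
  have hxyle : x ≤ y := fun u => by rw [hxy u]; linarith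
  have hxx' : x ≤ x' := fun u => by rw [hx'u u]; linarith [hcnn u]
  have hx'y' : x' ≤ y' := fun u => by rw [hx'u u, hy'u u, hxy u]; nlinarith [hr1 u]
  have hy'y : y' ≤ y := fun u => by rw [hy'u u]; linarith [hdnn u]
  have hxq : x ≤ q := fun u => le_inf le_sup_right (hxyle u)
  have hqy : q ≤ y := fun u => inf_le_right
  have hxq' : x ≤ q' := fun u => le_trans (hxx' u) (le_inf le_sup_right (hx'y' u))
  have hq'y : q' ≤ y := fun u => le_trans inf_le_right (hy'y u)
  have hxm : x ≤ m := fun u => le_inf (hxq u) (hxq' u)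
  have hmy : m ≤ y := fun u => le_trans inf_le_left (hqy u)
  have hqmem : q ∈ Set.Icc (0:N→ℝ) 1 := ⟨le_trans hx.1 hxq, le_trans hqy hy.2⟩
  have hq'mem : q' ∈ Set.Icc (0:N→ℝ) 1 := ⟨le_trans hx.1 hxq', le_trans hq'y hy.2⟩
  have hmmem : m ∈ Set.Icc (0:N→ℝ) 1 := ⟨le_trans hx.1 hxm, le_trans hmy hy.2⟩
  have hmq : m ≤ q := inf_le_left
  have hmq' : m ≤ q' := inf_le_right
  -- gradient comparisons
  have hFa : ∀ u, F' m (Pi.single u 1) ≤ a u := by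
    intro u; rw [ha u]; exact hanti x hx m hmmem hxm u
  have hFb : ∀ u, -(b u) ≤ F' q' (Pi.single u 1) := by
    intro u; rw [hb u, neg_neg]; exact hanti q' hq'mem y hy hq'y u
  have hA : F q - F m ≤ ∑ u, (q u - m u) * a u := by
    have h1 := (grad_bound_aux F F' hdiff hanti m q hmmem hqmem hmq).2
    rw [apply_eq_sum_aux] at h1
    refine le_trans h1 (Finset.sum_le_sum fun u _ => ?_)
    have hnn : 0 ≤ q u - m u := sub_nonneg.2 (hmq u)
    have : (q - m) u = q u - m u := rfl
    rw [this]
    exact mul_le_mul_of_nonneg_left (hFa u) hnn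
  have hB : F m - F q' ≤ ∑ u, (q' u - m u) * b u := by
    have h2 := (grad_bound_aux F F' hdiff hanti m q' hmmem hq'mem hmq').1
    rw [apply_eq_sum_aux] at h2
    have h3 : F m - F q' ≤ -∑ u, (q' - m) u * F' q' (Pi.single u 1) := by linarith
    rw [← Finset.sum_neg_distrib] at h3
    refine le_trans h3 (Finset.sum_le_sum fun u _ => ?_)
    have hnn : 0 ≤ q' u - m u := sub_nonneg.2 (hmq' u)
    have he : (q' - m) u = q' u - m u := rfl
    rw [he]
    nlinarith [hFb u]
  have key : ∀ u ∈ univ, (q u - m u) * a u + (q' u - m u) * b u ≤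
      (if 0 < a u ∧ 0 < b u then δ * max (b u * r u) (a u * (1 - r u)) else 0) := by
    intro u _
    have ineqA : q' u ≤ q u + δ * r u := by
      rw [hqu u, hq'u u]
      have := clamp_ineqA (zstar u) (x u) (y u) (δ * r u) (δ * (1 - r u)) (hcnn u) (hdnn u)
      linarith
    have ineqB : q u ≤ q' u + δ * (1 - r u) := by
      rw [hqu u, hq'u u]
      have := clamp_ineqB (zstar u) (x u) (y u) (δ * r u) (δ * (1 - r u)) (hcnn u) (hdnn u)
      linarith
    rcases le_total (q u) (q' u) with hle | hle
    · have hm : m u = q u := by rw [hmu u]; exact inf_eq_left.2 hle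
      rw [hm]
      by_cases hab : 0 < a u ∧ 0 < b u
      · rw [if_pos hab]
        have h4 : (q' u - q u) * b u ≤ (δ * r u) * b u :=
          mul_le_mul_of_nonneg_right (by linarith) hab.2.le
        have h5 : (δ * r u) * b u ≤ δ * max (b u * r u) (a u * (1 - r u)) := by
          have := le_max_left (b u * r u) (a u * (1 - r u))
          nlinarith
        linarith
      · rw [if_neg hab]
        by_cases ha' : 0 < a u
        · have hbu : b u ≤ 0 := by
            by_contra hc; exact hab ⟨ha', lt_of_not_ge hc⟩
          nlinarith
        · have hru : r u = 0 := by rw [hr u]; simp [hab, ha']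
          have : q' u ≤ q u := by rw [hru] at ineqA; linarith
          have hqq : q' u = q u := le_antisymm this hle
          rw [hqq]; simp
    · have hm : m u = q' u := by rw [hmu u]; exact inf_eq_right.2 hle
      rw [hm]
      by_cases hab : 0 < a u ∧ 0 < b u
      · rw [if_pos hab]
        have h4 : (q u - q' u) * a u ≤ (δ * (1 - r u)) * a u :=
          mul_le_mul_of_nonneg_right (by linarith) hab.1.le
        have h5 : (δ * (1 - r u)) * a u ≤ δ * max (b u * r u) (a u * (1 - r u)) := by
          have := le_max_right (b u * r u) (a u * (1 - r u))
          nlinarith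
        linarith
      · rw [if_neg hab]
        by_cases ha' : 0 < a u
        · have hbu : ¬ 0 < b u := fun hc => hab ⟨ha', hc⟩
          have hru : r u = 1 := by rw [hr u]; simp [hbu, ha']
          have : q u ≤ q' u := by rw [hru] at ineqB; linarith
          have hqq : q u = q' u := le_antisymm this hle
          rw [hqq]; simp
        · have hau : a u ≤ 0 := le_of_not_gt ha'
          nlinarith [mul_nonneg (sub_nonneg.2 hle) (neg_nonneg.2 hau)]
  calc F q - F q' = (F q - F m) + (F m - F q') := by ring
    _ ≤ (∑ u, (q u - m u) * a u) + ∑ u, (q' u - m u) * b u := add_le_add hA hB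
    _ = ∑ u, ((q u - m u) * a u + (q' u - m u) * b u) := (Finset.sum_add_distrib).symm
    _ ≤ ∑ u, (if 0 < a u ∧ 0 < b u then δ * max (b u * r u) (a u * (1 - r u)) else 0) :=
        Finset.sum_le_sum key
    _ = δ * ∑ u ∈ univ.filter (fun u => 0 < a u ∧ 0 < b u),
          max (b u * r u) (a u * (1 - r u)) := by
        rw [Finset.mul_sum, Finset.sum_filter]
end

section
/- Let f be a submodular set function on a finite ground set N and let X ⊆ X' ⊆ Y' ⊆ Y ⊆ N. Then Σ_{u ∈ Y'∖X'} [(f(X' ∪ {u}) − f(X')) − (f(Y') − f(Y' ∖ {u}))] ≤ Σ_{u ∈ Y∖X} [(f(X' ∪ {u}) − f(X' ∖ {u})) − (f(Y' ∪ {u}) − f(Y' ∖ {u}))]. -/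
open Finset

lemma insert_erase_eq_insert' {N : Type*} [DecidableEq N] (a : N) (s : Finset N) :
    insert a (s.erase a) = insert a s := by
  by_cases h : a ∈ s
  · rw [Finset.insert_erase h, Finset.insert_eq_self.mpr h]
  · rw [Finset.erase_eq_of_notMem h]

theorem stmt_17 {N : Type*} [DecidableEq N] (f : Finset N → ℝ)
    (hsub : ∀ S T : Finset N, S ⊆ T → ∀ e ∉ T,
      f (insert e T) - f T ≤ f (insert e S) - f S)
    (X X' Y' Y : Finset N) (h1 : X ⊆ X') (h2 : X' ⊆ Y') (h3 : Y' ⊆ Y) :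
    ∑ u ∈ Y' \ X', ((f (insert u X') - f X') - (f Y' - f (Y'.erase u))) ≤
      ∑ u ∈ Y \ X,
        ((f (insert u X') - f (X'.erase u)) - (f (insert u Y') - f (Y'.erase u))) := by
  have key : ∀ u : N,
      0 ≤ (f (insert u X') - f (X'.erase u)) - (f (insert u Y') - f (Y'.erase u)) := by
    intro u
    have h := hsub (X'.erase u) (Y'.erase u) (Finset.erase_subset_erase u h2)
      u (Finset.notMem_erase u Y')
    rw [insert_erase_eq_insert', insert_erase_eq_insert'] at h
    linarith
  have hsubset : Y' \ X' ⊆ Y \ X := Finset.sdiff_subset_sdiff h3 h1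
  calc ∑ u ∈ Y' \ X', ((f (insert u X') - f X') - (f Y' - f (Y'.erase u)))
      ≤ ∑ u ∈ Y' \ X',
        ((f (insert u X') - f (X'.erase u)) - (f (insert u Y') - f (Y'.erase u))) := by
        apply Finset.sum_le_sum
        intro u hu
        rw [Finset.mem_sdiff] at hu
        rw [Finset.erase_eq_of_notMem hu.2, Finset.insert_eq_self.mpr hu.1]
    _ ≤ ∑ u ∈ Y \ X,
        ((f (insert u X') - f (X'.erase u)) - (f (insert u Y') - f (Y'.erase u))) := by
        apply Finset.sum_le_sum_of_subset_of_nonneg hsubset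
        intro u _ _
        exact key u
end
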